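/- arXiv:2205.09496 — 7 statements merged into one kernel-verified Lean document; each statement's English description precedes it below -/
import Mathlib

section
/- Let P(x) = exp(−1/x) and let b_n denote the maximum of the absolute values of the coefficients a_j^{(n)} in the representation P^{(n)}(x) = (∑_{j=1}^{2n} a_j^{(n)} x^{−j}) e^{−1/x} (with a_{2n}^{(n)} = 1). Then b_{n+1} ≤ 8n² b_n for all n ≥ 1, and consequently b_n ≤ 8^n (n!)² for all n ≥ 1. -/
open scoped BigOperators

/-- `P x = exp (-1/x)`. -/
noncomputable def Pfun : ℝ → ℝ := fun x => Real.exp (-1 / x)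

/-- The coefficients. -/
def acoef : ℕ → ℕ → ℤ
  | 0, _ => 0
  | 1, j => if j = 2 then 1 else 0
  | (n+2), j => acoef (n+1) (j-2) - ((j-1 : ℕ) : ℤ) * acoef (n+1) (j-1)

lemma acoef_rec (n j : ℕ) (hn : 1 ≤ n) :
    acoef (n+1) j = acoef n (j-2) - ((j-1 : ℕ) : ℤ) * acoef n (j-1) := by
  cases n with
  | zero => omega
  | succ m => rfl

lemma acoef_zero (n : ℕ) : acoef n 0 = 0 := by
  induction n with
  | zero => rfl
  | succ m ih =>
    match m, ih with
    | 0, _ => rfl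
    | (k+1), ih => simp [acoef_rec (k+1) 0 (by omega), ih]

lemma acoef_high (n j : ℕ) (hn : 1 ≤ n) (hj : 2 * n < j) : acoef n j = 0 := by
  induction n generalizing j with
  | zero => omega
  | succ m ih =>
    rcases Nat.eq_zero_or_pos m with rfl | hm
    · show (if j = 2 then (1:ℤ) else 0) = 0
      rw [if_neg (by omega)]
    · rw [acoef_rec m j hm, ih (j-2) hm (by omega), ih (j-1) hm (by omega)]
      ring

lemma acoef_top (n : ℕ) (hn : 1 ≤ n) : acoef n (2 * n) = 1 := by
  induction n with
  | zero => omega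
  | succ m ih =>
    rcases Nat.eq_zero_or_pos m with rfl | hm
    · rfl
    · rw [acoef_rec m (2*(m+1)) hm]
      have h2 : 2 * (m+1) - 2 = 2 * m := by omega
      rw [h2, ih hm, acoef_high m (2*(m+1)-1) hm (by omega)]
      ring

noncomputable def Ffun (n : ℕ) : ℝ → ℝ :=
  fun x => (∑ j ∈ Finset.Icc 1 (2 * n), (acoef n j : ℝ) / x ^ j) * Real.exp (-1 / x)

lemma hasDerivAt_inv_pow (j : ℕ) {x : ℝ} (hx : x ≠ 0) :
    HasDerivAt (fun x : ℝ => (x ^ j)⁻¹) (-(j : ℝ) / x ^ (j+1)) x := by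
  have h := hasDerivAt_zpow (-(j:ℤ)) x (Or.inl hx)
  have h2 : HasDerivAt (fun y : ℝ => (y ^ j)⁻¹) (((-(j:ℤ) : ℤ) : ℝ) * x ^ (-(j:ℤ) - 1)) x := by
    refine h.congr_of_eventuallyEq ?_
    filter_upwards [eventually_ne_nhds hx] with y hy
    rw [zpow_neg, zpow_natCast]
  refine h2.congr_deriv ?_
  rw [show (-(j:ℤ) - 1) = -(((j+1:ℕ)):ℤ) by push_cast; ring, zpow_neg, zpow_natCast,
    div_eq_mul_inv]
  push_cast
  ring

lemma expNeg_hasDerivAt {x : ℝ} (hx : 0 < x) :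
    HasDerivAt (fun x : ℝ => Real.exp (-1 / x)) (Real.exp (-1 / x) * (x ^ 2)⁻¹) x := by
  have h1 : HasDerivAt (fun y : ℝ => -1 / y) ((x ^ 2)⁻¹) x := by
    have := (hasDerivAt_inv hx.ne').neg
    refine this.congr_of_eventuallyEq ?_ |>.congr_deriv (by ring)
    filter_upwards with y
    rw [neg_div, one_div]
    rfl
  exact h1.exp

lemma sum_hasDerivAt (n : ℕ) {x : ℝ} (hx : 0 < x) :
    HasDerivAt (fun x : ℝ => ∑ j ∈ Finset.Icc 1 (2 * n), (acoef n j : ℝ) / x ^ j)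
      (∑ j ∈ Finset.Icc 1 (2 * n), (acoef n j : ℝ) * (-(j : ℝ) / x ^ (j+1))) x := by
  refine HasDerivAt.fun_sum fun j _ => ?_
  have := (hasDerivAt_inv_pow j hx.ne').const_mul (acoef n j : ℝ)
  refine this.congr_of_eventuallyEq ?_
  filter_upwards with y
  rw [div_eq_mul_inv]

/-- The key algebraic identity between consecutive sums. -/
lemma sum_identity (n : ℕ) (hn : 1 ≤ n) {x : ℝ} (hx : 0 < x) :
    (∑ j ∈ Finset.Icc 1 (2 * n), (acoef n j : ℝ) * (-(j : ℝ) / x ^ (j+1)))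
      + (∑ j ∈ Finset.Icc 1 (2 * n), (acoef n j : ℝ) / x ^ j) * (x ^ 2)⁻¹
    = ∑ j ∈ Finset.Icc 1 (2 * (n+1)), (acoef (n+1) j : ℝ) / x ^ j := by
  have hx0 : x ≠ 0 := hx.ne'
  -- rewrite RHS using recursion and split
  have hrec : ∀ j ∈ Finset.Icc 1 (2 * (n+1)),
      (acoef (n+1) j : ℝ) / x ^ j
        = (acoef n (j-2) : ℝ) / x ^ j - ((j-1 : ℕ) : ℝ) * (acoef n (j-1) : ℝ) / x ^ j := by
    intro j _
    rw [acoef_rec n j hn]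
    push_cast
    ring
  rw [Finset.sum_congr rfl hrec, Finset.sum_sub_distrib]
  -- first sum on RHS
  have h1 : (∑ j ∈ Finset.Icc 1 (2 * (n+1)), (acoef n (j-2) : ℝ) / x ^ j)
      = ∑ j ∈ Finset.Icc 1 (2 * n), (acoef n j : ℝ) / x ^ (j + 2) := by
    rw [← Finset.sum_subset (Finset.Icc_subset_Icc (by omega) (by omega) :
        Finset.Icc 3 (2 * (n+1)) ⊆ Finset.Icc 1 (2 * (n+1)))]
    · have : Finset.Icc 3 (2 * (n+1)) = (Finset.Icc 1 (2*n)).map (addRightEmbedding 2) := by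
        rw [Finset.map_add_right_Icc]; congr 1
      rw [this, Finset.sum_map]
      refine Finset.sum_congr rfl fun k _ => ?_
      simp [addRightEmbedding]
    · intro j hj hj3
      simp only [Finset.mem_Icc] at hj hj3
      have : j - 2 = 0 := by omega
      rw [this, acoef_zero]
      simp
  -- second sum on RHS
  have h2 : (∑ j ∈ Finset.Icc 1 (2 * (n+1)), ((j-1 : ℕ) : ℝ) * (acoef n (j-1) : ℝ) / x ^ j)
      = ∑ j ∈ Finset.Icc 1 (2 * n), (j : ℝ) * (acoef n j : ℝ) / x ^ (j + 1) := by
    rw [← Finset.sum_subset (Finset.Icc_subset_Icc (by omega) (by omega) :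
        Finset.Icc 2 (2 * n + 1) ⊆ Finset.Icc 1 (2 * (n+1)))]
    · have : Finset.Icc 2 (2 * n + 1) = (Finset.Icc 1 (2*n)).map (addRightEmbedding 1) := by
        rw [Finset.map_add_right_Icc]
      rw [this, Finset.sum_map]
      refine Finset.sum_congr rfl fun k _ => ?_
      simp [addRightEmbedding]
    · intro j hj hj2
      simp only [Finset.mem_Icc] at hj hj2
      rcases Nat.eq_or_lt_of_le hj.1 with h | h
      · rw [← h]; simp
      · have hj1 : 2 * n < j - 1 := by omega
        rw [acoef_high n (j-1) hn hj1]
        simp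
  rw [h1, h2, Finset.sum_mul, ← Finset.sum_sub_distrib, ← Finset.sum_add_distrib]
  refine Finset.sum_congr rfl fun j hj => ?_
  have hxj : x ^ j ≠ 0 := pow_ne_zero _ hx0
  field_simp
  ring

lemma F_hasDerivAt (n : ℕ) (hn : 1 ≤ n) {x : ℝ} (hx : 0 < x) :
    HasDerivAt (Ffun n) (Ffun (n+1) x) x := by
  have h := (sum_hasDerivAt n hx).mul (expNeg_hasDerivAt hx)
  refine h.congr_deriv ?_
  unfold Ffun
  rw [← sum_identity n hn hx]
  ring

lemma iteratedDeriv_eq (n : ℕ) (hn : 1 ≤ n) :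
    ∀ x : ℝ, 0 < x → iteratedDeriv n Pfun x = Ffun n x := by
  induction n with
  | zero => omega
  | succ m ih =>
    rcases Nat.eq_zero_or_pos m with rfl | hm
    · intro x hx
      rw [iteratedDeriv_one]
      have h : HasDerivAt Pfun (Real.exp (-1/x) * (x^2)⁻¹) x := expNeg_hasDerivAt hx
      rw [h.deriv]
      unfold Ffun
      have : (2 : ℕ) * 1 = 2 := rfl
      rw [this, show Finset.Icc 1 2 = {1, 2} from rfl]
      have e1 : acoef 1 1 = 0 := rfl
      have e2 : acoef 1 2 = 1 := rfl
      rw [Finset.sum_insert (by decide), Finset.sum_singleton, e1, e2]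
      push_cast
      ring
    · intro x hx
      rw [iteratedDeriv_succ]
      have hev : iteratedDeriv m Pfun =ᶠ[nhds x] Ffun m := by
        filter_upwards [isOpen_Ioi.mem_nhds hx] with y hy
        exact ih hm y hy
      rw [hev.deriv_eq, (F_hasDerivAt m hm hx).deriv]

lemma acoef_natAbs_le (n : ℕ) (hn : 1 ≤ n) (j : ℕ) :
    (acoef n j).natAbs ≤ (Finset.Icc 1 (2 * n)).sup fun j => (acoef n j).natAbs := by
  by_cases h : j ∈ Finset.Icc 1 (2 * n)
  · exact Finset.le_sup (f := fun j => (acoef n j).natAbs) h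
  · simp only [Finset.mem_Icc, not_and, not_le] at h
    rcases Nat.eq_zero_or_pos j with rfl | hj
    · rw [acoef_zero]; simp
    · rw [acoef_high n j hn (h hj)]; simp

lemma b_rec (n : ℕ) (hn : 1 ≤ n) :
    ((Finset.Icc 1 (2 * (n + 1))).sup fun j => (acoef (n + 1) j).natAbs) ≤
      8 * n ^ 2 * ((Finset.Icc 1 (2 * n)).sup fun j => (acoef n j).natAbs) := by
  set b := (Finset.Icc 1 (2 * n)).sup fun j => (acoef n j).natAbs with hb
  refine Finset.sup_le fun j hj => ?_
  simp only [Finset.mem_Icc] at hj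
  rw [acoef_rec n j hn]
  calc (acoef n (j-2) - ((j-1 : ℕ) : ℤ) * acoef n (j-1)).natAbs
      ≤ (acoef n (j-2)).natAbs + (((j-1 : ℕ) : ℤ) * acoef n (j-1)).natAbs :=
        Int.natAbs_sub_le _ _
    _ = (acoef n (j-2)).natAbs + (j-1) * (acoef n (j-1)).natAbs := by
        rw [Int.natAbs_mul, Int.natAbs_natCast]
    _ ≤ b + (2*n+1) * b := by
        refine Nat.add_le_add (acoef_natAbs_le n hn _) ?_
        exact Nat.mul_le_mul (by omega) (acoef_natAbs_le n hn _)
    _ = (2*n+2) * b := by ring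
    _ ≤ 8 * n ^ 2 * b := Nat.mul_le_mul_right _ (by nlinarith)

/-- the integer coefficients `a_j^{(n)}` in
`P^{(n)}(x) = (∑_{j=1}^{2n} a_j^{(n)} x^{-j}) e^{-1/x}` (with `a_{2n}^{(n)} = 1`) satisfy
`b_{n+1} ≤ 8 n² b_n` and `b_n ≤ 8^n (n!)²`, where `b_n = max_{1 ≤ j ≤ 2n} |a_j^{(n)}|`. -/
theorem stmt3 :
    ∃ a : ℕ → ℕ → ℤ,
      (∀ n, 1 ≤ n → a n (2 * n) = 1 ∧
        ∀ x : ℝ, 0 < x →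
          iteratedDeriv n Pfun x =
            (∑ j ∈ Finset.Icc 1 (2 * n), (a n j : ℝ) / x ^ j) * Real.exp (-1 / x)) ∧
      (∀ n, 1 ≤ n →
        ((Finset.Icc 1 (2 * (n + 1))).sup fun j => (a (n + 1) j).natAbs) ≤
          8 * n ^ 2 * ((Finset.Icc 1 (2 * n)).sup fun j => (a n j).natAbs)) ∧
      (∀ n, 1 ≤ n →
        ((Finset.Icc 1 (2 * n)).sup fun j => (a n j).natAbs) ≤
          8 ^ n * (Nat.factorial n) ^ 2) := by
  refine ⟨acoef, fun n hn => ⟨acoef_top n hn, iteratedDeriv_eq n hn⟩, b_rec, ?_⟩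
  intro n hn
  induction n with
  | zero => omega
  | succ m ih =>
    rcases Nat.eq_zero_or_pos m with rfl | hm
    · have : ((Finset.Icc 1 (2 * 1)).sup fun j => (acoef 1 j).natAbs) = 1 := by decide
      rw [this]; simp [Nat.factorial]
    · calc ((Finset.Icc 1 (2 * (m+1))).sup fun j => (acoef (m+1) j).natAbs)
          ≤ 8 * m ^ 2 * ((Finset.Icc 1 (2 * m)).sup fun j => (acoef m j).natAbs) :=
            b_rec m hm
        _ ≤ 8 * m ^ 2 * (8 ^ m * (Nat.factorial m) ^ 2) :=
            Nat.mul_le_mul_left _ (ih hm)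
        _ ≤ 8 ^ (m+1) * (Nat.factorial (m+1)) ^ 2 := by
            rw [Nat.factorial_succ]
            have e : 8 ^ (m+1) * ((m+1) * Nat.factorial m) ^ 2
                = 8 * (m+1) ^ 2 * (8 ^ m * Nat.factorial m ^ 2) := by ring
            rw [e]
            exact Nat.mul_le_mul_right _
              (Nat.mul_le_mul_left _ (Nat.pow_le_pow_left (by omega) 2))
end

section
/- For P(x) = exp(−1/x): ∫₀^{1/2} |P(x)| dx ≤ 4/e², and for every n ≥ 1, ∫₀^{1/2} |P^{(n)}(x)| dx ≤ 2^{3n+1} (n!)² (2n)!. -/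
open Polynomial MeasureTheory Set


noncomputable def qp : ℕ → Polynomial ℝ
  | 0 => 1
  | (n+1) => Polynomial.X ^ 2 * (qp n - Polynomial.derivative (qp n))

lemma qp_natDegree (n : ℕ) : (qp n).natDegree ≤ 2 * n := by
  induction n with
  | zero => simp [qp]
  | succ n ih =>
    show (Polynomial.X ^ 2 * (qp n - Polynomial.derivative (qp n))).natDegree ≤ 2 * (n+1)
    calc (Polynomial.X ^ 2 * (qp n - Polynomial.derivative (qp n))).natDegree
        ≤ (Polynomial.X ^ 2 : ℝ[X]).natDegree + (qp n - Polynomial.derivative (qp n)).natDegree :=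
          Polynomial.natDegree_mul_le
      _ ≤ 2 + 2 * n := by
          have h1 := Polynomial.natDegree_sub_le (qp n) (Polynomial.derivative (qp n))
          have h2 := Polynomial.natDegree_derivative_le (qp n)
          have := ih
          simp only [Polynomial.natDegree_X_pow]
          omega
      _ ≤ 2 * (n+1) := by omega

lemma qp_coeff (n : ℕ) (j : ℕ) : |(qp n).coeff j| ≤ (Nat.factorial (2*n) : ℝ) := by
  induction n generalizing j with
  | zero =>
    show |(1 : ℝ[X]).coeff j| ≤ _
    rcases j with _ | j <;> simp [Polynomial.coeff_one]
  | succ n ih =>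
    show |(Polynomial.X ^ 2 * (qp n - Polynomial.derivative (qp n))).coeff j| ≤ _
    rw [show Polynomial.X ^ 2 * (qp n - Polynomial.derivative (qp n)) =
        (qp n - Polynomial.derivative (qp n)) * Polynomial.X ^ 2 from mul_comm _ _,
      Polynomial.coeff_mul_X_pow']
    by_cases h2 : 2 ≤ j
    · simp only [if_pos h2, Polynomial.coeff_sub, Polynomial.coeff_derivative]
      set k := j - 2 with hk
      have hb1 := ih k
      have hb2 := ih (k+1)
      have hfac : ((2*n).factorial : ℝ) ≤ ((2*(n+1)).factorial : ℝ) := by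
        exact_mod_cast Nat.factorial_le (by omega)
      by_cases hdeg : k + 1 ≤ 2 * n
      · calc |(qp n).coeff k - (qp n).coeff (k+1) * (k+1 : ℝ)|
            ≤ |(qp n).coeff k| + |(qp n).coeff (k+1) * (k+1 : ℝ)| := abs_sub _ _
          _ ≤ ((2*n).factorial : ℝ) + ((2*n).factorial : ℝ) * (2*n+1 : ℝ) := by
              rw [abs_mul]
              have : |((k : ℝ) + 1)| ≤ (2*n+1 : ℝ) := by
                rw [abs_of_nonneg (by positivity)]
                exact_mod_cast by exact_mod_cast Nat.cast_le.mpr (by omega : k + 1 ≤ 2*n+1)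
              have h' : |(qp n).coeff (k+1)| * |((k:ℝ)+1)| ≤ ((2*n).factorial : ℝ) * (2*n+1 : ℝ) := by
                apply mul_le_mul hb2 this (abs_nonneg _) (Nat.cast_nonneg _)
              push_cast at h' ⊢
              linarith
          _ ≤ ((2*(n+1)).factorial : ℝ) := by
              have : (2*(n+1)).factorial = (2*n+2) * ((2*n+1) * (2*n).factorial) := by
                rw [show 2*(n+1) = (2*n+1)+1 by ring, Nat.factorial_succ,
                  show 2*n+1 = (2*n)+1 from rfl, Nat.factorial_succ]
              rw [this]
              push_cast
              have hF1 : (1:ℝ) ≤ ((2*n).factorial : ℝ) := by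
                exact_mod_cast Nat.one_le_iff_ne_zero.mpr (Nat.factorial_ne_zero (2*n))
              nlinarith [mul_nonneg (mul_nonneg (by positivity : (0:ℝ) ≤ 2*(n:ℝ)) (by positivity : (0:ℝ) ≤ 2*(n:ℝ)+2)) (by positivity : (0:ℝ) ≤ ((2*n).factorial : ℝ))]
      · have hz : (qp n).coeff (k+1) = 0 :=
          Polynomial.coeff_eq_zero_of_natDegree_lt (lt_of_le_of_lt (qp_natDegree n) (by omega))
        rw [hz]
        simpa using hb1.trans hfac
    · simp only [if_neg h2, abs_zero]
      positivity

lemma deriv_step (p : Polynomial ℝ) {x : ℝ} (hx : 0 < x) :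
    HasDerivAt (fun y => Real.exp (-1 / y) * p.eval y⁻¹)
      (Real.exp (-1 / x) * (Polynomial.X ^ 2 * (p - Polynomial.derivative p)).eval x⁻¹) x := by
  have hne : x ≠ 0 := hx.ne'
  have hinv : HasDerivAt (fun y : ℝ => y⁻¹) (-(x^2)⁻¹) x := hasDerivAt_inv hne
  have h1 : HasDerivAt (fun y : ℝ => Real.exp (-1 / y)) (Real.exp (-1 / x) * (x^2)⁻¹) x := by
    have : HasDerivAt (fun y : ℝ => -1 / y) ((x^2)⁻¹) x := by
      have := hinv.neg
      simpa [neg_div, one_div, Pi.neg_def] using this.congr_deriv (by ring)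
    simpa using this.exp
  have h2 : HasDerivAt (fun y : ℝ => p.eval y⁻¹)
      ((Polynomial.derivative p).eval x⁻¹ * (-(x^2)⁻¹)) x :=
    (p.hasDerivAt x⁻¹).comp x hinv
  have := h1.fun_mul h2
  refine this.congr_deriv ?_
  simp only [Polynomial.eval_mul, Polynomial.eval_pow, Polynomial.eval_X, Polynomial.eval_sub]
  field_simp
  ring

lemma iter_eq (n : ℕ) : ∀ x : ℝ, 0 < x →
    iteratedDeriv n Pfun x = Real.exp (-1 / x) * (qp n).eval x⁻¹ := by
  induction n with
  | zero => intro x hx; simp [qp, Pfun]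
  | succ n ih =>
    intro x hx
    rw [iteratedDeriv_succ]
    have hev : iteratedDeriv n Pfun =ᶠ[nhds x]
        (fun y => Real.exp (-1 / y) * (qp n).eval y⁻¹) := by
      filter_upwards [IsOpen.mem_nhds isOpen_Ioi hx] with y hy
      exact ih y hy
    rw [hev.deriv_eq]
    exact (deriv_step (qp n) hx).deriv

lemma eval_bound (n : ℕ) {y : ℝ} (hy : 1 ≤ y) :
    |(qp n).eval y| ≤ ((2*n+1 : ℕ) : ℝ) * (2*n).factorial * y ^ (2*n) := by
  have hy0 : (0:ℝ) ≤ y := le_trans zero_le_one hy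
  rw [Polynomial.eval_eq_sum_range]
  calc |∑ i ∈ Finset.range ((qp n).natDegree + 1), (qp n).coeff i * y ^ i|
      ≤ ∑ i ∈ Finset.range ((qp n).natDegree + 1), |(qp n).coeff i * y ^ i| :=
        Finset.abs_sum_le_sum_abs _ _
    _ ≤ ∑ _i ∈ Finset.range ((qp n).natDegree + 1), ((2*n).factorial : ℝ) * y ^ (2*n) := by
        apply Finset.sum_le_sum
        intro i hi
        rw [abs_mul, abs_pow, abs_of_nonneg hy0]
        apply mul_le_mul (qp_coeff n i) _ (by positivity) (Nat.cast_nonneg _)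
        exact pow_le_pow_right₀ hy (by
          have := qp_natDegree n
          have := Finset.mem_range.mp hi
          omega)
    _ ≤ ((2*n+1 : ℕ) : ℝ) * (2*n).factorial * y ^ (2*n) := by
        rw [Finset.sum_const, Finset.card_range, nsmul_eq_mul]
        have h1 : (((qp n).natDegree + 1 : ℕ) : ℝ) ≤ ((2*n+1 : ℕ) : ℝ) := by
          exact_mod_cast Nat.succ_le_succ (qp_natDegree n)
        have : (0:ℝ) ≤ ((2*n).factorial : ℝ) * y ^ (2*n) := by positivity
        rw [mul_assoc]
        exact mul_le_mul_of_nonneg_right h1 this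

lemma pointwise_bound (n : ℕ) {x : ℝ} (hx : x ∈ Set.Ioc (0:ℝ) (1/2)) :
    |iteratedDeriv n Pfun x| ≤ ((2*n+1 : ℕ) : ℝ) * (2*n).factorial * (2*n).factorial := by
  obtain ⟨hx0, hx2⟩ := hx
  rw [iter_eq n x hx0]
  have hy1 : (1:ℝ) ≤ x⁻¹ := by
    rw [le_inv_comm₀ one_pos hx0] <;> linarith
  have hxy : -1 / x = -x⁻¹ := by rw [neg_div, one_div]
  rw [abs_mul, abs_of_nonneg (Real.exp_pos _).le]
  calc Real.exp (-1/x) * |(qp n).eval x⁻¹|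
      ≤ Real.exp (-1/x) * (((2*n+1 : ℕ) : ℝ) * (2*n).factorial * x⁻¹ ^ (2*n)) :=
        mul_le_mul_of_nonneg_left (eval_bound n hy1) (Real.exp_pos _).le
    _ ≤ ((2*n+1 : ℕ) : ℝ) * (2*n).factorial * (2*n).factorial := by
        rw [hxy]
        have key : Real.exp (-x⁻¹) * x⁻¹ ^ (2*n) ≤ ((2*n).factorial : ℝ) := by
          have h := Real.pow_div_factorial_le_exp (x := x⁻¹) (by positivity) (2*n)
          rw [Real.exp_neg]
          rw [div_le_iff₀ (by positivity)] at h
          rw [inv_mul_le_iff₀ (Real.exp_pos _)]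
          calc x⁻¹ ^ (2*n) ≤ Real.exp x⁻¹ * (2*n).factorial := h
            _ = Real.exp x⁻¹ * ((2*n).factorial : ℝ) := rfl
        calc Real.exp (-x⁻¹) * (((2*n+1 : ℕ) : ℝ) * (2*n).factorial * x⁻¹ ^ (2*n))
            = ((2*n+1 : ℕ) : ℝ) * (2*n).factorial * (Real.exp (-x⁻¹) * x⁻¹ ^ (2*n)) := by ring
          _ ≤ ((2*n+1 : ℕ) : ℝ) * (2*n).factorial * (2*n).factorial :=
              mul_le_mul_of_nonneg_left key (by positivity)

lemma integral_abs_le (f : ℝ → ℝ) (M : ℝ) (hbd : ∀ x ∈ Set.Ioc (0:ℝ) (1/2), |f x| ≤ M) :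
    (∫ x in (0:ℝ)..(1/2), |f x|) ≤ M / 2 := by
  rw [intervalIntegral.integral_of_le (by norm_num : (0:ℝ) ≤ 1/2)]
  have hs : volume (Set.Ioc (0:ℝ) (1/2)) < ⊤ := measure_Ioc_lt_top
  have h := norm_setIntegral_le_of_norm_le_const (μ := volume) (s := Set.Ioc (0:ℝ) (1/2))
      (f := fun x => |f x|) (C := M) hs
      ((fun x hx => by
        simpa [Real.norm_eq_abs, abs_abs] using hbd x hx))
  calc (∫ x in Set.Ioc (0:ℝ) (1/2), |f x|) ≤ ‖∫ x in Set.Ioc (0:ℝ) (1/2), |f x|‖ :=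
        le_abs_self _
    _ ≤ M * (volume (Set.Ioc (0:ℝ) (1/2))).toReal := h
    _ = M / 2 := by
        rw [Real.volume_Ioc, show (1/2 - 0 : ℝ) = 1/2 by norm_num,
          ENNReal.toReal_ofReal (by norm_num)]
        ring

lemma fact_two_mul_le (n : ℕ) : (2*n).factorial ≤ 4^n * n.factorial^2 := by
  induction n with
  | zero => simp
  | succ n ih =>
    have h1 : 2*(n+1) = (2*n+1)+1 := by ring
    rw [h1, Nat.factorial_succ, show 2*n+1 = (2*n)+1 from rfl, Nat.factorial_succ]
    calc (2*n+1+1) * ((2*n+1) * (2*n).factorial)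
        ≤ (2*n+2) * ((2*n+2) * (4^n * n.factorial^2)) := by
          apply Nat.mul_le_mul (by omega)
          exact Nat.mul_le_mul (by omega) ih
      _ = 4^(n+1) * ((n+1)*n.factorial)^2 := by ring
      _ = 4^(n+1) * (n+1).factorial^2 := by rw [Nat.factorial_succ]

lemma two_mul_add_one_le (n : ℕ) : 2*n+1 ≤ 2^(n+2) := by
  induction n with
  | zero => norm_num
  | succ n ih =>
    have : (2:ℕ) ≤ 2^(n+2) := by
      calc (2:ℕ) = 2^1 := rfl
        _ ≤ 2^(n+2) := Nat.pow_le_pow_right (by norm_num) (by omega)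
    calc 2*(n+1)+1 = (2*n+1) + 2 := by ring
      _ ≤ 2^(n+2) + 2^(n+2) := Nat.add_le_add ih this
      _ = 2^(n+3) := by ring

lemma nat_combo (n : ℕ) :
    (2*n+1) * (2*n).factorial * (2*n).factorial
      ≤ 2 * (2^(3*n+1) * n.factorial^2 * (2*n).factorial) := by
  have h1 : (2*n+1) * (2*n).factorial ≤ 2^(3*n+2) * n.factorial^2 := by
    calc (2*n+1) * (2*n).factorial ≤ 2^(n+2) * (4^n * n.factorial^2) :=
          Nat.mul_le_mul (two_mul_add_one_le n) (fact_two_mul_le n)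
      _ = 2^(3*n+2) * n.factorial^2 := by
          rw [show (4:ℕ) = 2^2 from rfl, ← Nat.pow_mul,
            show 3*n+2 = (n+2)+2*n by omega, Nat.pow_add]
          ring
  calc (2*n+1) * (2*n).factorial * (2*n).factorial
      ≤ (2^(3*n+2) * n.factorial^2) * (2*n).factorial := Nat.mul_le_mul_right _ h1
    _ = 2 * (2^(3*n+1) * n.factorial^2 * (2*n).factorial) := by ring

/-- `∫₀^{1/2} |P| ≤ 4/e²` and
`∫₀^{1/2} |P^{(n)}| ≤ 2^{3n+1} (n!)² (2n)!` for every `n ≥ 1`. -/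
theorem stmt5 :
    (∫ x in (0:ℝ)..(1/2), |Pfun x|) ≤ 4 / Real.exp 1 ^ 2 ∧
    ∀ n : ℕ, 1 ≤ n →
      (∫ x in (0:ℝ)..(1/2), |iteratedDeriv n Pfun x|) ≤
        2 ^ (3 * n + 1) * (Nat.factorial n) ^ 2 * Nat.factorial (2 * n) := by
  constructor
  · have h := integral_abs_le Pfun (Real.exp (-2)) (fun x hx => by
      obtain ⟨hx0, hx2⟩ := hx
      rw [show Pfun x = Real.exp (-1/x) from rfl, abs_of_nonneg (Real.exp_pos _).le]
      apply Real.exp_le_exp.mpr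
      rw [neg_div, neg_le_neg_iff, le_div_iff₀ hx0]
      linarith)
    apply h.trans
    have he2 : Real.exp 1 ^ 2 = Real.exp 2 := by
      rw [← Real.exp_nat_mul]; norm_num
    rw [he2, Real.exp_neg]
    have hp : (0:ℝ) < Real.exp 2 := Real.exp_pos 2
    rw [div_le_div_iff₀ (by positivity) hp, inv_mul_cancel₀ hp.ne']
    norm_num
  · intro n _
    have h := integral_abs_le (fun x => iteratedDeriv n Pfun x)
      (((2*n+1 : ℕ) : ℝ) * (2*n).factorial * (2*n).factorial)
      (fun x hx => pointwise_bound n hx)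
    apply h.trans
    rw [div_le_iff₀ (by norm_num : (0:ℝ) < 2)]
    have := nat_combo n
    calc ((2*n+1 : ℕ) : ℝ) * (2*n).factorial * (2*n).factorial
        ≤ ((2 * (2^(3*n+1) * n.factorial^2 * (2*n).factorial) : ℕ) : ℝ) := by
          exact_mod_cast this
      _ = 2 ^ (3 * n + 1) * (Nat.factorial n : ℝ) ^ 2 * Nat.factorial (2 * n) * 2 := by
          push_cast; ring
end

section
/- Define the bump weight w̄(x) = c · exp(−1/(x(1−x))) for x ∈ (0,1), with w̄(0) = w̄(1) = 0, where c = (∫₀¹ exp(−1/(s(1−s))) ds)^{−1}. Then there exists an absolute constant β > 1 such that ∫₀¹ |w̄^{(n)}(x)| dx ≤ c · n^{βn} for all n ≥ 2. -/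
open Polynomial Real Finset

/-- Normalizing constant `c = (∫₀¹ exp(-1/(s(1-s))) ds)⁻¹`. -/
noncomputable def cbar : ℝ := (∫ s in (0:ℝ)..1, Real.exp (-(s * (1 - s))⁻¹))⁻¹

/-- The bump weight `w̄(x) = c · exp(-1/(x(1-x)))` on `(0,1)`, `0` elsewhere. -/
noncomputable def wbar : ℝ → ℝ := fun x =>
  if 0 < x ∧ x < 1 then cbar * Real.exp (-(x * (1 - x))⁻¹) else 0

namespace Stmt6Aux

/-- Polynomials: `(d/dx)^n (exp (-1/x)) = Qp n (1/x) * exp (-1/x)` for `x > 0`. -/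
noncomputable def Qp : ℕ → ℝ[X]
  | 0 => 1
  | n + 1 => X ^ 2 * (Qp n - derivative (Qp n))

lemma natDegree_Qp_le (n : ℕ) : (Qp n).natDegree ≤ 2 * n := by
  induction n with
  | zero => simp [Qp]
  | succ n ih =>
    rw [Qp]
    calc (X ^ 2 * (Qp n - derivative (Qp n))).natDegree
        ≤ (X ^ 2 : ℝ[X]).natDegree + (Qp n - derivative (Qp n)).natDegree := natDegree_mul_le
      _ ≤ 2 + 2 * n := by
          refine add_le_add (by simp) ((natDegree_sub_le _ _).trans (max_le ih ?_))
          exact (natDegree_derivative_le _).trans ((Nat.sub_le _ _).trans ih)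
      _ = 2 * (n + 1) := by ring

lemma coeff_Qp_eq_zero {n i : ℕ} (h : 2 * n < i) : (Qp n).coeff i = 0 :=
  coeff_eq_zero_of_natDegree_lt (lt_of_le_of_lt (natDegree_Qp_le n) h)

/-- Sum of absolute values of coefficients. -/
noncomputable def S (n : ℕ) : ℝ := ∑ i ∈ range (2 * n + 1), |(Qp n).coeff i|

lemma S_nonneg (n : ℕ) : 0 ≤ S n := Finset.sum_nonneg fun _ _ => abs_nonneg _

lemma sum_shift_le (n : ℕ) : ∑ k ∈ range (2 * n + 1), |(Qp n).coeff (k + 1)| ≤ S n := by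
  have h1 : ∑ k ∈ range (2 * n + 1), |(Qp n).coeff (k + 1)|
      = ∑ k ∈ range (2 * n), |(Qp n).coeff (k + 1)| + |(Qp n).coeff (2 * n + 1)| :=
    Finset.sum_range_succ _ _
  have h2 : (Qp n).coeff (2 * n + 1) = 0 := coeff_Qp_eq_zero (by omega)
  have h3 : S n = ∑ k ∈ range (2 * n), |(Qp n).coeff (k + 1)| + |(Qp n).coeff 0| :=
    Finset.sum_range_succ' _ _
  rw [h1, h2, abs_zero, add_zero, h3]
  exact le_add_of_nonneg_right (abs_nonneg _)

lemma S_succ_le (n : ℕ) : S (n + 1) ≤ 2 * (n + 1) * S n := by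
  have hc : ∀ i, (Qp (n + 1)).coeff i
      = if 2 ≤ i then (Qp n - derivative (Qp n)).coeff (i - 2) else 0 := by
    intro i
    rw [Qp, mul_comm, coeff_mul_X_pow']
  have key : S (n + 1)
      = ∑ k ∈ range (2 * n + 1), |(Qp n - derivative (Qp n)).coeff k| := by
    have : S (n + 1) = ∑ i ∈ range (2 * (n + 1) + 1), |(Qp (n + 1)).coeff i| := rfl
    rw [this, show 2 * (n + 1) + 1 = (2 * n + 1) + 1 + 1 by ring,
      Finset.sum_range_succ' (fun i => |(Qp (n + 1)).coeff i|),
      Finset.sum_range_succ' (fun i => |(Qp (n + 1)).coeff (i + 1)|)]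
    have h0 : (Qp (n + 1)).coeff 0 = 0 := by rw [hc]; simp
    have h1 : (Qp (n + 1)).coeff 1 = 0 := by rw [hc]; simp
    rw [h0, h1, abs_zero, add_zero, add_zero]
    refine Finset.sum_congr rfl fun k _ => ?_
    rw [hc]
    simp
  rw [key]
  have step : ∀ k ∈ range (2 * n + 1), |(Qp n - derivative (Qp n)).coeff k|
      ≤ |(Qp n).coeff k| + (2 * n + 1) * |(Qp n).coeff (k + 1)| := by
    intro k hk
    rw [Polynomial.coeff_sub, Polynomial.coeff_derivative]
    refine (abs_sub _ _).trans (add_le_add le_rfl ?_)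
    rw [abs_mul]
    have hkk : k ≤ 2 * n := by
      have := Finset.mem_range.mp hk; omega
    have hk' : (k : ℝ) + 1 ≤ 2 * n + 1 := by
      have : (k : ℝ) ≤ 2 * n := by exact_mod_cast hkk
      linarith
    calc |(Qp n).coeff (k + 1)| * |(k : ℝ) + 1|
        ≤ |(Qp n).coeff (k + 1)| * (2 * n + 1) := by
          refine mul_le_mul_of_nonneg_left ?_ (abs_nonneg _)
          rw [abs_of_nonneg (by positivity)]
          exact hk'
      _ = (2 * n + 1) * |(Qp n).coeff (k + 1)| := mul_comm _ _
  calc ∑ k ∈ range (2 * n + 1), |(Qp n - derivative (Qp n)).coeff k|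
      ≤ ∑ k ∈ range (2 * n + 1),
          (|(Qp n).coeff k| + (2 * n + 1) * |(Qp n).coeff (k + 1)|) :=
        Finset.sum_le_sum step
    _ = S n + (2 * n + 1) * ∑ k ∈ range (2 * n + 1), |(Qp n).coeff (k + 1)| := by
        rw [Finset.sum_add_distrib, ← Finset.mul_sum]; rfl
    _ ≤ S n + (2 * n + 1) * S n := by
        refine add_le_add le_rfl (mul_le_mul_of_nonneg_left (sum_shift_le n) (by positivity))
    _ ≤ 2 * (n + 1) * S n := by nlinarith [S_nonneg n]

lemma S_le (n : ℕ) : S n ≤ 2 ^ n * n.factorial := by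
  induction n with
  | zero => simp [S, Qp]
  | succ n ih =>
    calc S (n + 1) ≤ 2 * (n + 1) * S n := S_succ_le n
      _ ≤ 2 * (n + 1) * (2 ^ n * n.factorial) := by
          refine mul_le_mul_of_nonneg_left ih (by positivity)
      _ = 2 ^ (n + 1) * (n + 1).factorial := by
          rw [Nat.factorial_succ]
          push_cast
          ring

lemma iteratedDeriv_expNegInvGlue (n : ℕ) :
    iteratedDeriv n expNegInvGlue = fun x => (Qp n).eval x⁻¹ * expNegInvGlue x := by
  induction n with
  | zero => simp [Qp]
  | succ n ih =>
    rw [iteratedDeriv_succ, ih]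
    funext x
    exact (expNegInvGlue.hasDerivAt_polynomial_eval_inv_mul (Qp n) x).deriv

/-- Global uniform bound on the iterated derivatives. -/
lemma bound_expNegInvGlue (n : ℕ) (x : ℝ) :
    |iteratedDeriv n expNegInvGlue x| ≤ 2 ^ n * n.factorial * (2 * n).factorial := by
  rw [iteratedDeriv_expNegInvGlue]
  dsimp only
  rcases le_or_gt x 0 with hx | hx
  · rw [expNegInvGlue.zero_of_nonpos hx, mul_zero, abs_zero]
    positivity
  · have hy : 0 < x⁻¹ := inv_pos.mpr hx
    have hglue : expNegInvGlue x = Real.exp (-x⁻¹) := by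
      simp [expNegInvGlue, not_le.mpr hx]
    rw [hglue]
    have heval : (Qp n).eval x⁻¹ = ∑ i ∈ range (2 * n + 1), (Qp n).coeff i * x⁻¹ ^ i :=
      eval_eq_sum_range' (lt_of_le_of_lt (natDegree_Qp_le n) (Nat.lt_succ_self _)) _
    have habs : |(Qp n).eval x⁻¹ * Real.exp (-x⁻¹)|
        ≤ ∑ i ∈ range (2 * n + 1), |(Qp n).coeff i| * (x⁻¹ ^ i * Real.exp (-x⁻¹)) := by
      rw [abs_mul, heval, abs_of_pos (Real.exp_pos _)]
      calc |∑ i ∈ range (2 * n + 1), (Qp n).coeff i * x⁻¹ ^ i| * Real.exp (-x⁻¹)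
          ≤ (∑ i ∈ range (2 * n + 1), |(Qp n).coeff i * x⁻¹ ^ i|) * Real.exp (-x⁻¹) := by
            exact mul_le_mul_of_nonneg_right (Finset.abs_sum_le_sum_abs _ _) (Real.exp_pos _).le
        _ = ∑ i ∈ range (2 * n + 1), |(Qp n).coeff i| * (x⁻¹ ^ i * Real.exp (-x⁻¹)) := by
            rw [Finset.sum_mul]
            refine Finset.sum_congr rfl fun i _ => ?_
            rw [abs_mul, abs_of_pos (pow_pos hy i), mul_assoc]
    refine habs.trans ?_
    have hterm : ∀ i ∈ range (2 * n + 1),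
        |(Qp n).coeff i| * (x⁻¹ ^ i * Real.exp (-x⁻¹))
          ≤ |(Qp n).coeff i| * (2 * n).factorial := by
      intro i hi
      refine mul_le_mul_of_nonneg_left ?_ (abs_nonneg _)
      have h1 : x⁻¹ ^ i ≤ i.factorial * Real.exp x⁻¹ := by
        have := Real.pow_div_factorial_le_exp x⁻¹ hy.le i
        have hfac : (0:ℝ) < i.factorial := by positivity
        rw [div_le_iff₀ hfac] at this
        linarith [this]
      have him : i ≤ 2 * n := by have := Finset.mem_range.mp hi; omega
      have h2 : (i.factorial : ℝ) ≤ (2 * n).factorial := by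
        exact_mod_cast Nat.factorial_le him
      calc x⁻¹ ^ i * Real.exp (-x⁻¹)
          ≤ (i.factorial * Real.exp x⁻¹) * Real.exp (-x⁻¹) :=
            mul_le_mul_of_nonneg_right h1 (Real.exp_pos _).le
        _ = i.factorial := by rw [mul_assoc, ← Real.exp_add]; simp
        _ ≤ (2 * n).factorial := h2
    calc ∑ i ∈ range (2 * n + 1), |(Qp n).coeff i| * (x⁻¹ ^ i * Real.exp (-x⁻¹))
        ≤ ∑ i ∈ range (2 * n + 1), |(Qp n).coeff i| * (2 * n).factorial :=
          Finset.sum_le_sum hterm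
      _ = S n * (2 * n).factorial := by rw [← Finset.sum_mul]; rfl
      _ ≤ 2 ^ n * n.factorial * (2 * n).factorial :=
          mul_le_mul_of_nonneg_right (S_le n) (by positivity)

/-- The reflected glue function. -/
lemma bound_reflected (n : ℕ) (x : ℝ) :
    |iteratedDeriv n (fun y => expNegInvGlue (1 - y)) x|
      ≤ 2 ^ n * n.factorial * (2 * n).factorial := by
  have h2 := iteratedDeriv_comp_neg n (fun z => expNegInvGlue (1 + z)) x
  have e : (fun y : ℝ => expNegInvGlue (1 - y)) = fun y => expNegInvGlue (1 + -y) := by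
    funext y; rw [sub_eq_add_neg]
  rw [e, h2]
  have h3 := iteratedDeriv_comp_const_add n expNegInvGlue 1
  rw [h3]
  simp only []
  rw [smul_eq_mul, abs_mul, abs_pow, abs_neg, abs_one, one_pow, one_mul,
    show (1:ℝ) + -x = 1 - x from by ring]
  exact bound_expNegInvGlue n (1 - x)

lemma wbar_eq : wbar = fun x => cbar * (expNegInvGlue x * expNegInvGlue (1 - x)) := by
  funext x
  unfold wbar
  by_cases h : 0 < x ∧ x < 1
  · rw [if_pos h]
    obtain ⟨h0, h1⟩ := h
    have hx1 : 0 < 1 - x := by linarith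
    have e1 : expNegInvGlue x = Real.exp (-x⁻¹) := by simp [expNegInvGlue, not_le.mpr h0]
    have e2 : expNegInvGlue (1 - x) = Real.exp (-(1 - x)⁻¹) := by
      simp [expNegInvGlue, not_le.mpr hx1]
    rw [e1, e2, ← Real.exp_add]
    congr 1
    have hx : x ≠ 0 := ne_of_gt h0
    have hx' : (1 : ℝ) - x ≠ 0 := ne_of_gt hx1
    field_simp
    ring
  · rw [if_neg h]
    rcases not_and_or.mp h with h' | h'
    · rw [expNegInvGlue.zero_of_nonpos (not_lt.mp h')]; ring
    · rw [expNegInvGlue.zero_of_nonpos (by linarith [not_lt.mp h'] : 1 - x ≤ 0)]; ring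

lemma integrand_integrable :
    IntervalIntegrable (fun s : ℝ => Real.exp (-(s * (1 - s))⁻¹))
      MeasureTheory.volume 0 1 := by
  have hmeas : Measurable fun s : ℝ => Real.exp (-(s * (1 - s))⁻¹) :=
    ((measurable_id'.mul (measurable_const.sub measurable_id')).inv.neg).exp
  refine IntervalIntegrable.mono_fun' (g := fun _ => (1:ℝ)) intervalIntegrable_const
    hmeas.aestronglyMeasurable.restrict ?_
  filter_upwards [MeasureTheory.ae_restrict_mem measurableSet_uIoc] with s hs
  rw [Set.uIoc_of_le zero_le_one] at hs
  obtain ⟨hs0, hs1⟩ := hs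
  rw [Real.norm_eq_abs, abs_of_pos (Real.exp_pos _)]
  rw [Real.exp_le_one_iff, neg_nonpos]
  have : 0 ≤ s * (1 - s) := by nlinarith
  positivity

lemma cbar_pos : 0 < cbar := by
  unfold cbar
  exact inv_pos.mpr (intervalIntegral.intervalIntegral_pos_of_pos integrand_integrable
    (fun x => Real.exp_pos _) one_pos)

lemma contDiff_g {n : ℕ∞} :
    ContDiff ℝ n (fun x : ℝ => expNegInvGlue x * expNegInvGlue (1 - x)) := by
  refine expNegInvGlue.contDiff.mul ?_
  have h := expNegInvGlue.contDiff (n := n) |>.comp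
    ((contDiff_const (c := (1:ℝ))).sub contDiff_id)
  exact h

lemma contDiff_g_nat (m : ℕ) :
    ContDiff ℝ (m : WithTop ℕ∞) (fun x : ℝ => expNegInvGlue x * expNegInvGlue (1 - x)) :=
  contDiff_g (n := (m : ℕ∞))

lemma contDiff_wbar_nat (m : ℕ) : ContDiff ℝ (m : WithTop ℕ∞) wbar := by
  rw [wbar_eq]
  exact contDiff_const.mul (contDiff_g_nat m)

/-- Nat-level arithmetic for one Leibniz term. -/
lemma nat_term_le {n i : ℕ} (hi : i ≤ n) :
    n.choose i * (2 ^ i * i.factorial * (2 * i).factorial)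
        * (2 ^ (n - i) * (n - i).factorial * (2 * (n - i)).factorial)
      ≤ 2 ^ n * n.factorial * (2 * n).factorial := by
  have h1 : n.choose i * i.factorial * (n - i).factorial = n.factorial :=
    Nat.choose_mul_factorial_mul_factorial hi
  have h2 : (2 ^ i : ℕ) * 2 ^ (n - i) = 2 ^ n := by
    rw [← pow_add]; congr 1; omega
  have h3 : (2 * i).factorial * (2 * (n - i)).factorial ≤ (2 * n).factorial := by
    have h4 : 2 * (n - i) = 2 * n - 2 * i := by omega
    have h5 : 2 * i ≤ 2 * n := by omega
    have hC : 1 ≤ (2 * n).choose (2 * i) := Nat.choose_pos h5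
    calc (2 * i).factorial * (2 * (n - i)).factorial
        = 1 * ((2 * i).factorial * (2 * n - 2 * i).factorial) := by rw [h4]; ring
      _ ≤ (2 * n).choose (2 * i) * ((2 * i).factorial * (2 * n - 2 * i).factorial) :=
          Nat.mul_le_mul hC le_rfl
      _ = (2 * n).choose (2 * i) * (2 * i).factorial * (2 * n - 2 * i).factorial := by ring
      _ = (2 * n).factorial := Nat.choose_mul_factorial_mul_factorial h5
  calc n.choose i * (2 ^ i * i.factorial * (2 * i).factorial)
        * (2 ^ (n - i) * (n - i).factorial * (2 * (n - i)).factorial)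
      = (2 ^ i * 2 ^ (n - i)) * (n.choose i * i.factorial * (n - i).factorial)
        * ((2 * i).factorial * (2 * (n - i)).factorial) := by ring
    _ = 2 ^ n * n.factorial * ((2 * i).factorial * (2 * (n - i)).factorial) := by rw [h1, h2]
    _ ≤ 2 ^ n * n.factorial * (2 * n).factorial := by
        exact Nat.mul_le_mul_left _ h3

/-- Pointwise bound on `iteratedDeriv n wbar`. -/
lemma wbar_pointwise (n : ℕ) (x : ℝ) :
    |iteratedDeriv n wbar x|
      ≤ cbar * ((n + 1) * (2 ^ n * n.factorial * (2 * n).factorial)) := by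
  set g : ℝ → ℝ := fun x => expNegInvGlue x * expNegInvGlue (1 - x) with hg
  have hwb : wbar = cbar • g := by rw [wbar_eq]; rfl
  have hsmul : iteratedDeriv n wbar x = cbar • iteratedDeriv n g x := by
    rw [hwb]
    rw [iteratedDeriv_eq_iteratedFDeriv, iteratedDeriv_eq_iteratedFDeriv,
      iteratedFDeriv_const_smul_apply (contDiff_g_nat n).contDiffAt]
    simp [hg]
  rw [hsmul, smul_eq_mul, abs_mul, abs_of_pos cbar_pos]
  refine mul_le_mul_of_nonneg_left ?_ cbar_pos.le
  have hf1 : ContDiff ℝ (n : WithTop ℕ∞) expNegInvGlue :=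
    expNegInvGlue.contDiff (n := (n : ℕ∞))
  have hf2 : ContDiff ℝ (n : WithTop ℕ∞) (fun y : ℝ => expNegInvGlue (1 - y)) := by
    have h := expNegInvGlue.contDiff (n := (n : ℕ∞)) |>.comp
      ((contDiff_const (c := (1:ℝ))).sub contDiff_id)
    exact h
  have hleib := norm_iteratedFDeriv_mul_le (𝕜 := ℝ) (f := expNegInvGlue)
    (g := fun y : ℝ => expNegInvGlue (1 - y)) (N := (n : WithTop ℕ∞)) hf1 hf2 x le_rfl
  have hnorm : |iteratedDeriv n g x| = ‖iteratedFDeriv ℝ n g x‖ := by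
    rw [norm_iteratedFDeriv_eq_norm_iteratedDeriv, Real.norm_eq_abs]
  rw [hnorm]
  refine hleib.trans ?_
  have hterm : ∀ i ∈ range (n + 1),
      (n.choose i : ℝ) * ‖iteratedFDeriv ℝ i expNegInvGlue x‖
        * ‖iteratedFDeriv ℝ (n - i) (fun y : ℝ => expNegInvGlue (1 - y)) x‖
      ≤ (2 ^ n * n.factorial * (2 * n).factorial : ℕ) := by
    intro i hi
    have hi' : i ≤ n := Nat.lt_succ_iff.mp (Finset.mem_range.mp hi)
    have b1 : ‖iteratedFDeriv ℝ i expNegInvGlue x‖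
        ≤ ((2 ^ i * i.factorial * (2 * i).factorial : ℕ) : ℝ) := by
      rw [norm_iteratedFDeriv_eq_norm_iteratedDeriv, Real.norm_eq_abs]
      push_cast
      exact bound_expNegInvGlue i x
    have b2 : ‖iteratedFDeriv ℝ (n - i) (fun y : ℝ => expNegInvGlue (1 - y)) x‖
        ≤ ((2 ^ (n - i) * (n - i).factorial * (2 * (n - i)).factorial : ℕ) : ℝ) := by
      rw [norm_iteratedFDeriv_eq_norm_iteratedDeriv, Real.norm_eq_abs]
      push_cast
      exact bound_reflected (n - i) x
    calc (n.choose i : ℝ) * ‖iteratedFDeriv ℝ i expNegInvGlue x‖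
          * ‖iteratedFDeriv ℝ (n - i) (fun y : ℝ => expNegInvGlue (1 - y)) x‖
        ≤ (n.choose i : ℝ) * ((2 ^ i * i.factorial * (2 * i).factorial : ℕ) : ℝ)
          * ((2 ^ (n - i) * (n - i).factorial * (2 * (n - i)).factorial : ℕ) : ℝ) := by
          refine mul_le_mul (mul_le_mul_of_nonneg_left b1 (by positivity)) b2 (norm_nonneg _)
            (by positivity)
      _ = ((n.choose i * (2 ^ i * i.factorial * (2 * i).factorial)
          * (2 ^ (n - i) * (n - i).factorial * (2 * (n - i)).factorial) : ℕ) : ℝ) := by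
          push_cast; ring
      _ ≤ ((2 ^ n * n.factorial * (2 * n).factorial : ℕ) : ℝ) := by
          exact_mod_cast nat_term_le hi'
  calc ∑ i ∈ range (n + 1), (n.choose i : ℝ) * ‖iteratedFDeriv ℝ i expNegInvGlue x‖
        * ‖iteratedFDeriv ℝ (n - i) (fun y : ℝ => expNegInvGlue (1 - y)) x‖
      ≤ ∑ _i ∈ range (n + 1), ((2 ^ n * n.factorial * (2 * n).factorial : ℕ) : ℝ) :=
        Finset.sum_le_sum hterm
    _ = (n + 1) * ((2 ^ n * n.factorial * (2 * n).factorial : ℕ) : ℝ) := by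
        rw [Finset.sum_const, Finset.card_range, nsmul_eq_mul]; push_cast; ring
    _ = (n + 1) * (2 ^ n * n.factorial * (2 * n).factorial) := by push_cast; ring

lemma nat_final (n : ℕ) (hn : 2 ≤ n) :
    (n + 1) * (2 ^ n * n.factorial * (2 * n).factorial) ≤ n ^ (7 * n) := by
  have h1 : n + 1 ≤ n ^ n := by
    calc n + 1 ≤ n ^ 2 := by nlinarith
      _ ≤ n ^ n := Nat.pow_le_pow_right (by omega) hn
  have h2 : 2 ^ n ≤ n ^ n := Nat.pow_le_pow_left hn n
  have h3 : n.factorial ≤ n ^ n := Nat.factorial_le_pow n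
  have h4 : (2 * n).factorial ≤ n ^ (4 * n) := by
    calc (2 * n).factorial ≤ (2 * n) ^ (2 * n) := Nat.factorial_le_pow _
      _ = 2 ^ (2 * n) * n ^ (2 * n) := by rw [Nat.mul_pow]
      _ ≤ n ^ (2 * n) * n ^ (2 * n) :=
          Nat.mul_le_mul_right _ (Nat.pow_le_pow_left hn _)
      _ = n ^ (4 * n) := by rw [← pow_add]; congr 1; omega
  calc (n + 1) * (2 ^ n * n.factorial * (2 * n).factorial)
      ≤ n ^ n * (n ^ n * n ^ n * n ^ (4 * n)) := by
        refine Nat.mul_le_mul h1 (Nat.mul_le_mul (Nat.mul_le_mul h2 h3) h4)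
    _ = n ^ (7 * n) := by rw [← pow_add, ← pow_add, ← pow_add]; congr 1; omega

end Stmt6Aux

open Stmt6Aux in
/-- `∫₀¹ |w̄^{(n)}| ≤ c · n^{βn}` for all `n ≥ 2`, for some absolute `β > 1`. -/
theorem stmt6 :
    ∃ β : ℝ, 1 < β ∧
      ∀ n : ℕ, 2 ≤ n →
        (∫ x in (0:ℝ)..1, |iteratedDeriv n wbar x|) ≤ cbar * (n : ℝ) ^ (β * n) := by
  refine ⟨7, by norm_num, fun n hn => ?_⟩
  set M : ℝ := cbar * ((n + 1) * (2 ^ n * n.factorial * (2 * n).factorial)) with hM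
  have hcont : Continuous (fun x => |iteratedDeriv n wbar x|) :=
    ((contDiff_wbar_nat n).continuous_iteratedDeriv n le_rfl).abs
  have hint : IntervalIntegrable (fun x => |iteratedDeriv n wbar x|)
      MeasureTheory.volume 0 1 := hcont.intervalIntegrable 0 1
  have step1 : (∫ x in (0:ℝ)..1, |iteratedDeriv n wbar x|) ≤ M := by
    calc (∫ x in (0:ℝ)..1, |iteratedDeriv n wbar x|)
        ≤ ∫ _x in (0:ℝ)..1, M :=
          intervalIntegral.integral_mono_on zero_le_one hint
            (intervalIntegrable_const) (fun x _ => wbar_pointwise n x)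
      _ = M := by simp
  refine step1.trans ?_
  rw [hM]
  refine mul_le_mul_of_nonneg_left ?_ cbar_pos.le
  have hrw : (n : ℝ) ^ ((7 : ℝ) * n) = ((n ^ (7 * n) : ℕ) : ℝ) := by
    rw [show (7 : ℝ) * n = ((7 * n : ℕ) : ℝ) by push_cast; ring, Real.rpow_natCast]
    push_cast
    ring
  rw [hrw]
  calc ((n : ℝ) + 1) * (2 ^ n * n.factorial * (2 * n).factorial)
      = (((n + 1) * (2 ^ n * n.factorial * (2 * n).factorial) : ℕ) : ℝ) := by push_cast; ring
    _ ≤ ((n ^ (7 * n) : ℕ) : ℝ) := by exact_mod_cast nat_final n hn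
end

section
/- Let η ≥ 2 be an integer, and for ν ∈ ℕ⁺ let N(ν) = #{k ∈ ℤ*^∞ : k ≠ 0, |k|_η = ν}, where |k|_η = ∑_{j∈ℕ} ⟨j⟩^η |k_j|. Then N(ν) is finite and N(ν) ≤ 2^{⌊ν^{1/η}⌋+1} · C(ν + ⌊ν^{1/η}⌋, ν), where C(·,·) is the binomial coefficient. -/
open scoped BigOperators

/-- `|k|_η = ∑_j ⟨j⟩^η |k_j|` for a finitely supported integer sequence `k`. -/
def etaNorm (η : ℕ) (k : ℕ →₀ ℤ) : ℕ :=
  ∑ j ∈ k.support, (max 1 j) ^ η * (k j).natAbs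

private lemma card_finset_sum {β γ : Type*} [DecidableEq β] (s : Finset β)
    (f : β → Multiset γ) : Multiset.card (∑ i ∈ s, f i) = ∑ i ∈ s, Multiset.card (f i) := by
  induction s using Finset.induction with
  | empty => simp
  | insert a s h ih => simp [Finset.sum_insert h, ih]

private lemma int_eq_of_natAbs_sign (a b : ℤ) (h1 : a.natAbs = b.natAbs)
    (h2 : decide (0 ≤ a) = decide (0 ≤ b)) : a = b := by
  rw [decide_eq_decide] at h2
  omega

/-- the number of nonzero finitely supported integer sequences with
`|k|_η = ν` is finite and bounded by `2^{⌊ν^{1/η}⌋+1} · C(ν + ⌊ν^{1/η}⌋, ν)`. -/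
theorem stmt9 (η : ℕ) (hη : 2 ≤ η) (ν : ℕ) (hν : 1 ≤ ν) :
    {k : ℕ →₀ ℤ | k ≠ 0 ∧ etaNorm η k = ν}.Finite ∧
    Nat.card {k : ℕ →₀ ℤ | k ≠ 0 ∧ etaNorm η k = ν} ≤
      2 ^ (⌊(ν : ℝ) ^ ((1 : ℝ) / η)⌋₊ + 1) *
        Nat.choose (ν + ⌊(ν : ℝ) ^ ((1 : ℝ) / η)⌋₊) ν := by
  classical
  set m := ⌊(ν : ℝ) ^ ((1 : ℝ) / η)⌋₊ with hm
  have hηR : (η : ℝ) ≠ 0 := by positivity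
  -- if j^η ≤ ν then j ≤ m
  have hkey : ∀ j : ℕ, j ^ η ≤ ν → j ≤ m := by
    intro j hj
    rw [hm, Nat.le_floor_iff (by positivity)]
    have hj' : ((j : ℝ) ^ (η : ℕ)) ≤ (ν : ℝ) := by exact_mod_cast hj
    have h1 : (j : ℝ) = ((j : ℝ) ^ (η : ℕ)) ^ ((1 : ℝ) / η) := by
      rw [← Real.rpow_natCast (j : ℝ) η, ← Real.rpow_mul (by positivity)]
      rw [mul_one_div, div_self hηR, Real.rpow_one]
    rw [h1]
    exact Real.rpow_le_rpow (by positivity) hj' (by positivity)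
  -- support bound
  have hsupp : ∀ k : ℕ →₀ ℤ, etaNorm η k = ν → ∀ j, k j ≠ 0 → j ≤ m := by
    intro k hk j hj
    have hjs : j ∈ k.support := Finsupp.mem_support_iff.mpr hj
    have hterm : (max 1 j) ^ η * (k j).natAbs ≤ ν := by
      rw [← hk, etaNorm]
      exact Finset.single_le_sum (f := fun j => (max 1 j) ^ η * (k j).natAbs) (fun i _ => Nat.zero_le _) hjs
    have habs : 1 ≤ (k j).natAbs := Nat.one_le_iff_ne_zero.mpr (by simpa using hj)
    apply hkey
    calc j ^ η ≤ (max 1 j) ^ η := Nat.pow_le_pow_left (le_max_right 1 j) η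
      _ = (max 1 j) ^ η * 1 := (mul_one _).symm
      _ ≤ (max 1 j) ^ η * (k j).natAbs := Nat.mul_le_mul_left _ habs
      _ ≤ ν := hterm
  -- etaNorm as a sum over Fin (m+1)
  have hsum : ∀ k : ℕ →₀ ℤ, etaNorm η k = ν →
      ∑ j : Fin (m + 1), (max 1 (j : ℕ)) ^ η * (k (j : ℕ)).natAbs = ν := by
    intro k hk
    rw [Fin.sum_univ_eq_sum_range (fun j => (max 1 j) ^ η * (k j).natAbs) (m + 1), ← hk, etaNorm]
    apply (Finset.sum_subset _ _).symm
    · intro j hj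
      rw [Finsupp.mem_support_iff] at hj
      rw [Finset.mem_range, Nat.lt_succ_iff]
      exact hsupp k hk j hj
    · intro j _ hj
      rw [Finsupp.notMem_support_iff] at hj
      simp [hj]
  set S := {k : ℕ →₀ ℤ | k ≠ 0 ∧ etaNorm η k = ν} with hS
  -- the auxiliary count function
  set t : (ℕ →₀ ℤ) → ℕ := fun k =>
    ∑ j ∈ Finset.univ.erase (0 : Fin (m + 1)), (k (j : ℕ)).natAbs with ht
  have htle : ∀ k : ℕ →₀ ℤ, etaNorm η k = ν → t k ≤ ν := by
    intro k hk
    rw [← hsum k hk]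
    calc t k ≤ ∑ j ∈ Finset.univ.erase (0 : Fin (m + 1)),
          (max 1 (j : ℕ)) ^ η * (k (j : ℕ)).natAbs := by
          apply Finset.sum_le_sum
          intro j _
          have : 1 ≤ (max 1 (j : ℕ)) ^ η := Nat.one_le_pow _ _ (by simp)
          calc (k (j : ℕ)).natAbs = 1 * (k (j : ℕ)).natAbs := (one_mul _).symm
            _ ≤ (max 1 (j : ℕ)) ^ η * (k (j : ℕ)).natAbs := Nat.mul_le_mul_right _ this
      _ ≤ ∑ j : Fin (m + 1), (max 1 (j : ℕ)) ^ η * (k (j : ℕ)).natAbs :=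
          Finset.sum_le_sum_of_subset (Finset.erase_subset _ _)
  set g : (ℕ →₀ ℤ) → Fin (m + 1) → ℕ := fun k j =>
    if j = 0 then ν - t k else (k (j : ℕ)).natAbs with hg
  have hgsum : ∀ k : ℕ →₀ ℤ, etaNorm η k = ν → ∑ j, g k j = ν := by
    intro k hk
    rw [← Finset.add_sum_erase _ _ (Finset.mem_univ (0 : Fin (m + 1)))]
    have h1 : g k 0 = ν - t k := by simp [hg]
    have h2 : ∑ j ∈ Finset.univ.erase (0 : Fin (m + 1)), g k j = t k := by
      apply Finset.sum_congr rfl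
      intro j hj
      simp only [Finset.mem_erase] at hj
      simp [hg, hj.1]
    rw [h1, h2]
    have := htle k hk
    omega
  -- the injection
  set M : (ℕ →₀ ℤ) → Multiset (Fin (m + 1)) := fun k =>
    ∑ j : Fin (m + 1), Multiset.replicate (g k j) j with hM
  have hMcard : ∀ k : ℕ →₀ ℤ, etaNorm η k = ν → Multiset.card (M k) = ν := by
    intro k hk
    rw [hM]
    simp only []
    rw [card_finset_sum]
    simp only [Multiset.card_replicate]
    exact hgsum k hk
  have hMcount : ∀ (k : ℕ →₀ ℤ) (j : Fin (m + 1)), (M k).count j = g k j := by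
    intro k j
    rw [hM]
    simp only []
    rw [Multiset.count_sum']
    simp only [Multiset.count_replicate]
    simp
  set F : S → (Fin (m + 1) → Bool) × Sym (Fin (m + 1)) ν := fun k =>
    ⟨fun j => decide (0 ≤ k.1 (j : ℕ)), ⟨M k.1, hMcard k.1 k.2.2⟩⟩ with hF
  have hFinj : Function.Injective F := by
    intro a b hab
    rw [hF] at hab
    have hsign := congrArg Prod.fst hab
    have hmul := congrArg Prod.snd hab
    -- counts agree
    have hcnt : ∀ j : Fin (m + 1), g a.1 j = g b.1 j := by
      intro j
      rw [← hMcount a.1 j, ← hMcount b.1 j]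
      exact congrArg (Multiset.count j) (congrArg (fun s : Sym (Fin (m + 1)) ν => s.1) hmul)
    -- natAbs agree away from 0
    have habs : ∀ j : ℕ, 1 ≤ j → (a.1 j).natAbs = (b.1 j).natAbs := by
      intro j hj1
      by_cases hjm : j ≤ m
      · have hlt : j < m + 1 := Nat.lt_succ_of_le hjm
        have := hcnt ⟨j, hlt⟩
        have hne : (⟨j, hlt⟩ : Fin (m + 1)) ≠ 0 := by
          intro h
          have := Fin.mk.injEq j hlt 0 (Nat.succ_pos m) ▸ h
          simp [Fin.ext_iff] at h
          omega
        simpa [hg, hne] using this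
      · have ha0 : a.1 j = 0 := by
          by_contra h
          exact hjm (hsupp a.1 a.2.2 j h)
        have hb0 : b.1 j = 0 := by
          by_contra h
          exact hjm (hsupp b.1 b.2.2 j h)
        rw [ha0, hb0]
    -- natAbs agree at 0 too
    have habs0 : (a.1 0).natAbs = (b.1 0).natAbs := by
      have hsa := hsum a.1 a.2.2
      have hsb := hsum b.1 b.2.2
      rw [← Finset.add_sum_erase _ _ (Finset.mem_univ (0 : Fin (m + 1)))] at hsa hsb
      have heq : ∑ j ∈ Finset.univ.erase (0 : Fin (m + 1)),
          (max 1 (j : ℕ)) ^ η * (a.1 (j : ℕ)).natAbs =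
          ∑ j ∈ Finset.univ.erase (0 : Fin (m + 1)),
          (max 1 (j : ℕ)) ^ η * (b.1 (j : ℕ)).natAbs := by
        apply Finset.sum_congr rfl
        intro j hj
        simp only [Finset.mem_erase] at hj
        have hj1 : 1 ≤ (j : ℕ) := by
          rcases Nat.eq_zero_or_pos (j : ℕ) with h | h
          · exact absurd (Fin.ext (by simp [h])) hj.1
          · exact h
        rw [habs (j : ℕ) hj1]
      rw [heq] at hsa
      simp only [Fin.val_zero, Nat.max_zero, one_pow, one_mul] at hsa hsb
      omega
    have habsall : ∀ j : ℕ, (a.1 j).natAbs = (b.1 j).natAbs := by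
      intro j
      rcases Nat.eq_zero_or_pos j with h | h
      · rw [h]; exact habs0
      · exact habs j h
    -- conclude equality
    have : ∀ j : ℕ, a.1 j = b.1 j := by
      intro j
      by_cases hjm : j ≤ m
      · have hlt : j < m + 1 := Nat.lt_succ_of_le hjm
        have hs := congrFun hsign (⟨j, hlt⟩ : Fin (m + 1))
        exact int_eq_of_natAbs_sign _ _ (habsall j) hs
      · have ha0 : a.1 j = 0 := by
          by_contra h
          exact hjm (hsupp a.1 a.2.2 j h)
        have hb0 : b.1 j = 0 := by
          by_contra h
          exact hjm (hsupp b.1 b.2.2 j h)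
        rw [ha0, hb0]
    exact Subtype.ext (Finsupp.ext this)
  have hfin : Finite S := Finite.of_injective F hFinj
  constructor
  · exact Set.toFinite S
  · calc Nat.card S ≤ Nat.card ((Fin (m + 1) → Bool) × Sym (Fin (m + 1)) ν) :=
        Nat.card_le_card_of_injective F hFinj
      _ = 2 ^ (m + 1) * Nat.choose (ν + m) ν := by
        rw [Nat.card_eq_fintype_card, Fintype.card_prod, Sym.card_sym_eq_choose]
        congr 1
        · simp
        · congr 1
          simp [Fintype.card_fin]
          omega
end

section
/- There exists a constant C(η) > 0 such that for every integer η ≥ 2 and every ν ∈ ℕ⁺, the number of nonzero finitely-supported integer sequences k with |k|_η = ν is at most C(η) · ν^{ν^{1/η}}. -/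
open scoped BigOperators

private lemma factAux (b : ℕ) : ∀ M : ℕ, b ^ (M+1) ≤ b ^ (b+1) * (M.factorial)^2 := by
  intro M
  rcases Nat.eq_zero_or_pos b with hb | hb
  · subst hb; simp [pow_succ]
  induction M with
  | zero => simpa using Nat.le_self_pow (by omega) b
  | succ M ih =>
    rcases le_or_gt (M+2) (b+1) with h | h
    · calc b ^ (M+1+1) ≤ b ^ (b+1) := Nat.pow_le_pow_right hb h
        _ ≤ b ^ (b+1) * ((M+1).factorial)^2 :=
          Nat.le_mul_of_pos_right _ (by positivity)
    · have hb2 : b ≤ (M+1)^2 := by nlinarith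
      calc b ^ (M+1+1) = b * b^(M+1) := by ring
        _ ≤ (M+1)^2 * (b^(b+1) * (M.factorial)^2) := Nat.mul_le_mul hb2 ih
        _ = b^(b+1) * ((M+1).factorial)^2 := by
            rw [Nat.factorial_succ]; ring

private lemma prod_max_fact (n : ℕ) :
    ∏ j ∈ Finset.range (n+1), max 1 j = n.factorial := by
  induction n with
  | zero => simp
  | succ n ih =>
      rw [Finset.prod_range_succ, ih, Nat.factorial_succ,
        max_eq_right (by omega), Nat.mul_comm]

/-- for each integer `η ≥ 2` there is `C(η) > 0` with
`#{k ≠ 0 : |k|_η = ν} ≤ C(η) · ν^{ν^{1/η}}` for every `ν ∈ ℕ⁺`. -/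
theorem stmt10 (η : ℕ) (hη : 2 ≤ η) :
    ∃ C : ℝ, 0 < C ∧
      ∀ ν : ℕ, 1 ≤ ν →
        {k : ℕ →₀ ℤ | k ≠ 0 ∧ etaNorm η k = ν}.Finite ∧
        (Nat.card {k : ℕ →₀ ℤ | k ≠ 0 ∧ etaNorm η k = ν} : ℝ) ≤
          C * (ν : ℝ) ^ ((ν : ℝ) ^ ((1 : ℝ) / η)) := by
  set b : ℕ := 3 * 2 ^ η with hb
  have hbpos : 0 < b := by positivity
  refine ⟨((b ^ (b+1) : ℕ) : ℝ), by positivity, ?_⟩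
  intro ν hν
  set x : ℝ := (ν : ℝ) ^ ((1:ℝ)/η) with hxdef
  have hν1 : (1:ℝ) ≤ (ν:ℝ) := by exact_mod_cast hν
  have hν0 : (0:ℝ) ≤ (ν:ℝ) := by positivity
  have hx0 : 0 ≤ x := Real.rpow_nonneg hν0 _
  have hηR : (η:ℝ) ≠ 0 := Nat.cast_ne_zero.mpr (by omega)
  have hxpow : x ^ η = (ν:ℝ) := by
    rw [hxdef, ← Real.rpow_natCast ((ν:ℝ) ^ ((1:ℝ)/η)) η, ← Real.rpow_mul hν0]
    rw [one_div, inv_mul_cancel₀ hηR, Real.rpow_one]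
  set M : ℕ := ⌊x⌋₊ with hM
  have hkey : ∀ j : ℕ, j ≤ M ↔ (j:ℝ)^η ≤ (ν:ℝ) := by
    intro j
    rw [hM, Nat.le_floor_iff hx0]
    constructor
    · intro h
      calc (j:ℝ)^η ≤ x^η := pow_le_pow_left₀ (by positivity) h η
        _ = ν := hxpow
    · intro h
      exact le_of_pow_le_pow_left₀ (n := η) (by omega) hx0 (by rw [hxpow]; exact h)
  -- the coefficient bound function
  set d : ℕ → ℕ := fun j => ν / (max 1 j)^η with hd
  have hone : ∀ j : ℕ, 0 < (max 1 j)^η := fun j => by positivity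
  have hdzero : ∀ j, M < j → d j = 0 := by
    intro j hj
    have hj1 : 1 ≤ j := by omega
    apply Nat.div_eq_of_lt
    rw [max_eq_right hj1]
    by_contra h
    push_neg at h
    have : (j:ℝ)^η ≤ (ν:ℝ) := by exact_mod_cast h
    exact absurd ((hkey j).mpr this) (by omega)
  have hgsupp : ∀ j : ℕ, (fun j => ((d j : ℤ))) j ≠ 0 → j ∈ Finset.range (M+1) := by
    intro j hj
    simp only [ne_eq, Nat.cast_eq_zero] at hj
    rw [Finset.mem_range]
    by_contra h
    exact hj (hdzero j (by omega))
  set g : ℕ →₀ ℤ := Finsupp.onFinset (Finset.range (M+1)) (fun j => ((d j : ℤ))) hgsupp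
    with hg
  have hgapp : ∀ j, g j = (d j : ℤ) := fun j => rfl
  -- the set is contained in Icc (-g) g
  have hsub : {k : ℕ →₀ ℤ | k ≠ 0 ∧ etaNorm η k = ν} ⊆ ↑(Finset.Icc (-g) g) := by
    intro k hk
    obtain ⟨-, hkν⟩ := hk
    have hterm : ∀ j, (max 1 j)^η * (k j).natAbs ≤ ν := by
      intro j
      by_cases hj : j ∈ k.support
      · rw [← hkν]
        exact Finset.single_le_sum (f := fun j => (max 1 j)^η * (k j).natAbs)
          (fun i _ => Nat.zero_le _) hj
      · simp [Finsupp.notMem_support_iff.mp hj]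
    have habs : ∀ j, (k j).natAbs ≤ d j := by
      intro j
      rw [hd]
      exact (Nat.le_div_iff_mul_le (hone j)).mpr (by rw [Nat.mul_comm]; exact hterm j)
    have habsZ : ∀ j, |k j| ≤ g j := by
      intro j
      rw [hgapp, Int.abs_eq_natAbs]
      exact_mod_cast habs j
    simp only [Finset.coe_Icc, Set.mem_Icc]
    constructor
    · rw [Finsupp.le_def]
      intro j
      rw [Finsupp.neg_apply]
      exact neg_le_of_abs_le (habsZ j)
    · rw [Finsupp.le_def]
      intro j
      exact le_of_abs_le (habsZ j)
  refine ⟨Set.Finite.subset (Finset.finite_toSet _) hsub, ?_⟩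
  -- cardinality bound via the interval
  have hcard1 : Nat.card {k : ℕ →₀ ℤ | k ≠ 0 ∧ etaNorm η k = ν}
      ≤ (Finset.Icc (-g) g).card := by
    have := Nat.card_mono (Finset.finite_toSet _) hsub
    simpa [Nat.card_eq_finsetCard] using this
  have hfac : ∀ i, (Finset.Icc (-(g i)) (g i)).card = 2 * d i + 1 := by
    intro i
    rw [Int.card_Icc, hgapp]
    omega
  have hcard2 : (Finset.Icc (-g) g).card ≤ ∏ j ∈ Finset.range (M+1), (2 * d j + 1) := by
    rw [Finsupp.card_Icc]
    refine le_trans (le_of_eq (Finset.prod_congr rfl (fun i _ => ?_)))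
      (Finset.prod_le_prod_of_subset_of_one_le' ?_ ?_)
    · rw [Finsupp.neg_apply]; exact hfac i
    · intro i hi
      simp only [Finsupp.support_neg, Finset.mem_union, or_self] at hi
      exact Finsupp.support_onFinset_subset hi
    · intro j _ _
      omega
  -- the product bound, all in ℕ
  have hmle : ∀ j, j ≤ M → (max 1 j)^η ≤ ν := by
    intro j hj
    rcases Nat.eq_zero_or_pos j with h0 | h1
    · subst h0; simpa using hν
    · rw [max_eq_right h1]
      have := (hkey j).mp hj
      exact_mod_cast this
  have hprodbound : (∏ j ∈ Finset.range (M+1), (2 * d j + 1)) * (M.factorial)^η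
      ≤ 3^(M+1) * ν^(M+1) := by
    calc (∏ j ∈ Finset.range (M+1), (2 * d j + 1)) * (M.factorial)^η
        = (∏ j ∈ Finset.range (M+1), (2 * d j + 1)) *
            ∏ j ∈ Finset.range (M+1), (max 1 j)^η := by
          rw [Finset.prod_pow, prod_max_fact]
      _ = ∏ j ∈ Finset.range (M+1), ((2 * d j + 1) * (max 1 j)^η) :=
          Finset.prod_mul_distrib.symm
      _ ≤ ∏ j ∈ Finset.range (M+1), (3 * ν) := by
          refine Finset.prod_le_prod (fun i _ => Nat.zero_le _) ?_
          intro j hjmem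
          have hj : j ≤ M := by have := Finset.mem_range.mp hjmem; omega
          have hm : (max 1 j)^η ≤ ν := hmle j hj
          have h1 : ν / (max 1 j)^η * (max 1 j)^η ≤ ν := Nat.div_mul_le_self _ _
          have : (2 * d j + 1) * (max 1 j)^η
              = 2 * (ν / (max 1 j)^η * (max 1 j)^η) + (max 1 j)^η := by rw [hd]; ring
          omega
      _ = 3^(M+1) * ν^(M+1) := by
          rw [Finset.prod_const, Finset.card_range, mul_pow]
  have h3nat : 3^(M+1) * (M+1)^η ≤ b^(b+1) * (M.factorial)^η := by
    have h1 : (M+1)^η ≤ (2^(M+1))^η := Nat.pow_le_pow_left (Nat.lt_two_pow_self (n := M+1)).le η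
    calc 3^(M+1) * (M+1)^η ≤ 3^(M+1) * (2^(M+1))^η := Nat.mul_le_mul_left _ h1
      _ = b^(M+1) := by rw [hb, mul_pow, ← pow_mul, ← pow_mul]; ring
      _ ≤ b^(b+1) * (M.factorial)^2 := factAux b M
      _ ≤ b^(b+1) * (M.factorial)^η :=
          Nat.mul_le_mul_left _ (Nat.pow_le_pow_right M.factorial_pos hη)
  -- real estimates
  have hMx : (M:ℝ) ≤ x := Nat.floor_le hx0
  have hνM1 : (ν:ℝ) ≤ ((M:ℝ)+1)^η := by
    calc (ν:ℝ) = x^η := hxpow.symm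
      _ ≤ ((M:ℝ)+1)^η := pow_le_pow_left₀ hx0 (Nat.lt_floor_add_one x).le η
  have hrpow : (ν:ℝ)^(M:ℕ) ≤ (ν:ℝ) ^ x := by
    rw [← Real.rpow_natCast (ν:ℝ) M]
    exact Real.rpow_le_rpow_of_exponent_le hν1 hMx
  have hnat : (Nat.card {k : ℕ →₀ ℤ | k ≠ 0 ∧ etaNorm η k = ν}) * (M.factorial)^η
      ≤ 3^(M+1) * ν^(M+1) :=
    le_trans (Nat.mul_le_mul_right _ (hcard1.trans hcard2)) hprodbound
  have hA : (0:ℝ) < ((M.factorial : ℝ))^η := by positivity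
  have hR : (Nat.card {k : ℕ →₀ ℤ | k ≠ 0 ∧ etaNorm η k = ν} : ℝ) * (M.factorial:ℝ)^η
      ≤ (3:ℝ)^(M+1) * (ν:ℝ)^(M+1) := by exact_mod_cast hnat
  have h3R : (3:ℝ)^(M+1) * ((M:ℝ)+1)^η ≤ ((b^(b+1) : ℕ) : ℝ) * (M.factorial:ℝ)^η := by
    have := h3nat
    push_cast at this ⊢
    exact_mod_cast this
  have hfinal : (Nat.card {k : ℕ →₀ ℤ | k ≠ 0 ∧ etaNorm η k = ν} : ℝ) * (M.factorial:ℝ)^η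
      ≤ (((b ^ (b+1) : ℕ) : ℝ) * (ν:ℝ) ^ x) * (M.factorial:ℝ)^η := by
    calc (Nat.card {k : ℕ →₀ ℤ | k ≠ 0 ∧ etaNorm η k = ν} : ℝ) * (M.factorial:ℝ)^η
        ≤ (3:ℝ)^(M+1) * (ν:ℝ)^(M+1) := hR
      _ = (3:ℝ)^(M+1) * ((ν:ℝ) * (ν:ℝ)^(M:ℕ)) := by ring
      _ ≤ (3:ℝ)^(M+1) * (((M:ℝ)+1)^η * (ν:ℝ)^x) := by
          refine mul_le_mul_of_nonneg_left ?_ (by positivity)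
          exact mul_le_mul hνM1 hrpow (by positivity) (by positivity)
      _ = ((3:ℝ)^(M+1) * ((M:ℝ)+1)^η) * (ν:ℝ)^x := by ring
      _ ≤ (((b^(b+1) : ℕ) : ℝ) * (M.factorial:ℝ)^η) * (ν:ℝ)^x := by
          refine mul_le_mul_of_nonneg_right h3R (Real.rpow_nonneg hν0 _)
      _ = (((b ^ (b+1) : ℕ) : ℝ) * (ν:ℝ) ^ x) * (M.factorial:ℝ)^η := by ring
  exact le_of_mul_le_mul_right hfinal hA
end

section
/- Let Δ̃_∞(x) = e^x and let d(|k|_η) satisfy d(|k|_η) ≤ K · e^{|k|_η/(2m)} for all nonzero finitely supported integer sequences k (with some constant K depending on η, μ, m), where η ≥ 2 is an integer and m ≥ 2. Then ∑_{0≠k∈ℤ*^∞} d(|k|_η)^m / Δ̃_∞(|k|_η) < ∞. -/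
-- key: for ν ≥ 64^4, ((2ν+1):ℝ)^(ν.sqrt+1) ≤ exp(ν/4)
lemma key (ν : ℕ) (hν : 64^4 ≤ ν) :
    ((2 * ν + 1 : ℕ) : ℝ) ^ (ν.sqrt + 1) ≤ Real.exp (ν / 4) := by
  set x : ℝ := (ν : ℝ) with hxdef
  have hx1 : (1 : ℝ) ≤ x := by
    rw [hxdef]
    have : (1:ℕ) ≤ ν := le_trans (by norm_num) hν
    exact_mod_cast this
  have hx0 : (0:ℝ) < x := lt_of_lt_of_le one_pos hx1
  have hy : (0:ℝ) < 2 * x + 1 := by positivity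
  have hcast : ((2 * ν + 1 : ℕ) : ℝ) = 2 * x + 1 := by push_cast; ring
  rw [hcast]
  -- rewrite pow as exp
  have hpow : (2 * x + 1) ^ (ν.sqrt + 1) = Real.exp ((ν.sqrt + 1 : ℕ) * Real.log (2 * x + 1)) := by
    rw [Real.exp_nat_mul, Real.exp_log hy]
  rw [hpow]
  apply Real.exp_le_exp.mpr
  -- bound s + 1 ≤ 2√x
  have hsqx : (1:ℝ) ≤ Real.sqrt x := by
    rw [show (1:ℝ) = Real.sqrt 1 by simp]
    exact Real.sqrt_le_sqrt hx1
  have hs : ((ν.sqrt : ℝ)) ≤ Real.sqrt x := by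
    rw [Real.le_sqrt (by positivity) (le_of_lt hx0), hxdef]
    have := Nat.sqrt_le' ν
    exact_mod_cast this
  have hs1 : ((ν.sqrt + 1 : ℕ) : ℝ) ≤ 2 * Real.sqrt x := by
    push_cast; nlinarith
  -- bound log(2x+1) ≤ 8 √√x
  have h4 : (0:ℝ) < Real.sqrt (Real.sqrt (2*x+1)) := Real.sqrt_pos.mpr (Real.sqrt_pos.mpr hy)
  have ht4 : Real.sqrt (Real.sqrt (2*x+1)) ^ 4 = 2*x+1 := by
    have h1 : Real.sqrt (2*x+1) ^ 2 = 2*x+1 := Real.sq_sqrt (le_of_lt hy)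
    have h2 : Real.sqrt (Real.sqrt (2*x+1)) ^ 2 = Real.sqrt (2*x+1) :=
      Real.sq_sqrt (Real.sqrt_nonneg _)
    nlinarith
  have hlog : Real.log (2*x+1) ≤ 4 * Real.sqrt (Real.sqrt (2*x+1)) := by
    have := Real.log_le_sub_one_of_pos h4
    have hl4 : Real.log (2*x+1) = 4 * Real.log (Real.sqrt (Real.sqrt (2*x+1))) := by
      nth_rewrite 1 [← ht4]
      rw [Real.log_pow]; push_cast; ring
    nlinarith
  have hss : Real.sqrt (Real.sqrt (2*x+1)) ≤ 2 * Real.sqrt (Real.sqrt x) := by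
    have h1 : Real.sqrt (2*x+1) ≤ 2 * Real.sqrt x := by
      rw [show (2:ℝ) * Real.sqrt x = Real.sqrt (4*x) by
        rw [show (4:ℝ)*x = 2^2 * x by ring, Real.sqrt_mul (by positivity), Real.sqrt_sq (by norm_num)]]
      apply Real.sqrt_le_sqrt; nlinarith
    calc Real.sqrt (Real.sqrt (2*x+1)) ≤ Real.sqrt (2 * Real.sqrt x) := Real.sqrt_le_sqrt h1
      _ ≤ Real.sqrt (4 * Real.sqrt x) := Real.sqrt_le_sqrt (by nlinarith [Real.sqrt_nonneg x])
      _ = 2 * Real.sqrt (Real.sqrt x) := by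
          rw [show (4:ℝ) * Real.sqrt x = 2^2 * Real.sqrt x by ring,
            Real.sqrt_mul (by positivity), Real.sqrt_sq (by norm_num)]
  have hlog2 : Real.log (2*x+1) ≤ 8 * Real.sqrt (Real.sqrt x) := by nlinarith
  -- product bound
  have hlognn : 0 ≤ Real.log (2*x+1) := Real.log_nonneg (by nlinarith)
  have hprod : ((ν.sqrt + 1 : ℕ) : ℝ) * Real.log (2*x+1)
      ≤ 16 * Real.sqrt x * Real.sqrt (Real.sqrt x) := by
    nlinarith [Real.sqrt_nonneg x, Real.sqrt_nonneg (Real.sqrt x)]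
  -- 16 √x √√x ≤ x/4 when √√x ≥ 64
  have h64 : (64:ℝ) ≤ Real.sqrt (Real.sqrt x) := by
    have : ((64:ℝ)^4) ≤ x := by
      have : ((64^4 : ℕ) : ℝ) ≤ x := by rw [hxdef]; exact_mod_cast hν
      push_cast at this; linarith
    calc (64:ℝ) = Real.sqrt (Real.sqrt ((64:ℝ)^4)) := by
          rw [show ((64:ℝ)^4) = ((64:ℝ)^2)^2 by ring, Real.sqrt_sq (by positivity),
            Real.sqrt_sq (by norm_num)]
      _ ≤ Real.sqrt (Real.sqrt x) := Real.sqrt_le_sqrt (Real.sqrt_le_sqrt this)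
  have hq2 : Real.sqrt (Real.sqrt x) ^ 2 = Real.sqrt x := Real.sq_sqrt (Real.sqrt_nonneg x)
  have hx2 : Real.sqrt x ^ 2 = x := Real.sq_sqrt (le_of_lt hx0)
  calc ((ν.sqrt + 1 : ℕ) : ℝ) * Real.log (2*x+1) ≤ 16 * Real.sqrt x * Real.sqrt (Real.sqrt x) := hprod
    _ ≤ x / 4 := by nlinarith [Real.sqrt_nonneg x, Real.sqrt_nonneg (Real.sqrt x)]


lemma sumN : Summable (fun ν : ℕ => ((2*ν+1 : ℕ) : ℝ)^(ν.sqrt+1) * Real.exp (-(ν:ℝ)/2)) := by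
  rw [← summable_nat_add_iff (64^4)]
  have hgeo : Summable (fun n : ℕ => Real.exp (-(1:ℝ)/4) ^ n) :=
    summable_geometric_of_lt_one (le_of_lt (Real.exp_pos _)) (Real.exp_lt_one_iff.mpr (by norm_num))
  apply Summable.of_nonneg_of_le (fun n => by positivity) _ hgeo
  intro n
  set ν : ℕ := n + 64^4 with hν
  have hkey : ((2 * ν + 1 : ℕ) : ℝ) ^ (ν.sqrt + 1) ≤ Real.exp (ν / 4) :=
    key ν (by omega)
  have h1 : ((2*ν+1 : ℕ) : ℝ)^(ν.sqrt+1) * Real.exp (-(ν:ℝ)/2)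
      ≤ Real.exp ((ν:ℝ)/4) * Real.exp (-(ν:ℝ)/2) := by
    apply mul_le_mul_of_nonneg_right hkey (le_of_lt (Real.exp_pos _))
  have h2 : Real.exp ((ν:ℝ)/4) * Real.exp (-(ν:ℝ)/2) = Real.exp (-(1:ℝ)/4) ^ ν := by
    rw [← Real.exp_add, ← Real.exp_nat_mul]; ring_nf
  have h3 : Real.exp (-(1:ℝ)/4) ^ ν ≤ Real.exp (-(1:ℝ)/4) ^ n := by
    apply pow_le_pow_of_le_one (le_of_lt (Real.exp_pos _))
      (le_of_lt (Real.exp_lt_one_iff.mpr (by norm_num)))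
    omega
  calc ((2*ν+1 : ℕ) : ℝ)^(ν.sqrt+1) * Real.exp (-(ν:ℝ)/2) ≤ Real.exp (-(1:ℝ)/4) ^ ν := by
        rw [← h2]; exact h1
    _ ≤ _ := h3
open scoped BigOperators

lemma term_le (η : ℕ) (k : ℕ →₀ ℤ) {j : ℕ} (hj : j ∈ k.support) :
    (max 1 j) ^ η * (k j).natAbs ≤ etaNorm η k :=
  Finset.single_le_sum (f := fun j => (max 1 j) ^ η * (k j).natAbs)
    (fun _ _ => Nat.zero_le _) hj

lemma natAbs_le (η : ℕ) (k : ℕ →₀ ℤ) (j : ℕ) : (k j).natAbs ≤ etaNorm η k := by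
  by_cases hj : j ∈ k.support
  · calc (k j).natAbs ≤ (max 1 j) ^ η * (k j).natAbs :=
        Nat.le_mul_of_pos_left _ (by positivity)
      _ ≤ etaNorm η k := term_le η k hj
  · simp [Finsupp.notMem_support_iff.mp hj]

lemma one_le_etaNorm (η : ℕ) {k : ℕ →₀ ℤ} (hk : k ≠ 0) : 1 ≤ etaNorm η k := by
  obtain ⟨j, hj⟩ := Finsupp.support_nonempty_iff.mpr hk
  calc 1 ≤ (max 1 j) ^ η * (k j).natAbs := by
        have h1 : 1 ≤ (max 1 j) ^ η := Nat.one_le_pow _ _ (by omega)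
        have h2 : 1 ≤ (k j).natAbs := by
          have := Finsupp.mem_support_iff.mp hj
          omega
        exact Nat.one_le_iff_ne_zero.mpr (by positivity)
    _ ≤ etaNorm η k := term_le η k hj

lemma supp_le_sqrt (η : ℕ) (hη : 2 ≤ η) {k : ℕ →₀ ℤ} (hk : k ≠ 0) {j : ℕ}
    (hj : j ∈ k.support) : j ≤ (etaNorm η k).sqrt := by
  by_cases h1 : j ≤ 1
  · have : 1 ≤ (etaNorm η k).sqrt := by
      have := one_le_etaNorm η hk
      have := Nat.sqrt_pos.mpr (by omega : 0 < etaNorm η k)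
      omega
    omega
  · push_neg at h1
    rw [Nat.le_sqrt]
    have hmax : max 1 j = j := by omega
    have habs : 1 ≤ (k j).natAbs := by
      have := Finsupp.mem_support_iff.mp hj; omega
    calc j * j = j ^ 2 := by ring
      _ ≤ j ^ η := Nat.pow_le_pow_right (by omega) hη
      _ ≤ (max 1 j) ^ η * (k j).natAbs := by
          rw [hmax]; exact Nat.le_mul_of_pos_right _ (by omega)
      _ ≤ etaNorm η k := term_le η k hj

-- the sigma type of "coded" finsupps
abbrev Fib (ν : ℕ) : Type := Fin (ν.sqrt + 1) → (Finset.Icc (-(ν:ℤ)) (ν:ℤ))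

noncomputable def code (η : ℕ) (k : {k : ℕ →₀ ℤ // k ≠ 0}) : Σ ν : ℕ, Fib ν :=
  ⟨etaNorm η k.1, fun j => ⟨k.1 (j : ℕ), by
    rw [Finset.mem_Icc]
    have := natAbs_le η k.1 (j : ℕ)
    omega⟩⟩

lemma code_injective (η : ℕ) (hη : 2 ≤ η) : Function.Injective (code η) := by
  have : Function.Injective ((fun p : Σ ν : ℕ, Fib ν =>
      (p.1, fun j : ℕ => if h : j < p.1.sqrt + 1 then (p.2 ⟨j, h⟩ : ℤ) else 0)) ∘ (code η)) := by
    intro a b hab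
    simp only [Function.comp, Prod.mk.injEq] at hab
    obtain ⟨h1, h2⟩ := hab
    simp only [code] at h1 h2
    apply Subtype.ext
    ext j
    by_cases hj : j < (etaNorm η a.1).sqrt + 1
    · have hj' : j < (etaNorm η b.1).sqrt + 1 := by rw [← h1]; exact hj
      have := congrFun h2 j
      exact (dif_pos hj).symm.trans (this.trans (dif_pos hj'))
    · have ha : a.1 j = 0 := by
        by_contra hne
        exact hj (by have := supp_le_sqrt η hη a.2 (Finsupp.mem_support_iff.mpr hne); omega)
      have hb : b.1 j = 0 := by
        by_contra hne
        have := supp_le_sqrt η hη b.2 (Finsupp.mem_support_iff.mpr hne)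
        rw [← h1] at this
        exact hj (by omega)
      rw [ha, hb]
  exact Function.Injective.of_comp this
/-- if `d(|k|_η) ≤ K e^{|k|_η/(2m)}` and `Δ̃_∞(x) = e^x`, then
`∑_{0 ≠ k ∈ ℤ*^∞} d(|k|_η)^m / Δ̃_∞(|k|_η) < ∞`. -/
theorem stmt12 (η m : ℕ) (hη : 2 ≤ η) (hm : 2 ≤ m)
    (d : ℝ → ℝ) (hd0 : ∀ x, 0 ≤ d x) (K : ℝ) (hK : 0 < K)
    (hd : ∀ k : ℕ →₀ ℤ, k ≠ 0 →
      d (etaNorm η k) ≤ K * Real.exp ((etaNorm η k : ℝ) / (2 * m))) :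
    Summable (fun k : {k : ℕ →₀ ℤ // k ≠ 0} =>
      d (etaNorm η k.1) ^ m / Real.exp (etaNorm η k.1)) := by
  -- the dominating function on the sigma type
  set f : (Σ ν : ℕ, Fib ν) → ℝ := fun p => K ^ m * Real.exp (-(p.1 : ℝ) / 2) with hf
  have hfsum : Summable f := by
    apply (summable_sigma_of_nonneg (fun p => by positivity)).mpr
    constructor
    · intro ν; exact Summable.of_finite
    · have hbase := (sumN.mul_left (K ^ m))
      apply hbase.congr
      intro ν
      have hcard : Nat.card (Fib ν) = (2 * ν + 1) ^ (ν.sqrt + 1) := by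
        rw [Nat.card_eq_fintype_card, Fintype.card_fun, Fintype.card_coe, Int.card_Icc,
          Fintype.card_fin]
        congr 1
        omega
      simp only [hf]
      rw [tsum_const, hcard, nsmul_eq_mul]
      push_cast
      ring
  have hcomp : Summable (f ∘ code η) := hfsum.comp_injective (code_injective η hη)
  apply Summable.of_nonneg_of_le (fun k => div_nonneg (pow_nonneg (hd0 _) m) (Real.exp_pos _).le) _ hcomp
  intro k
  set ν : ℕ := etaNorm η k.1 with hν
  have hm0 : (m : ℝ) ≠ 0 := by
    have : (0:ℝ) < m := by exact_mod_cast (by omega : 0 < m)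
    exact ne_of_gt this
  have hdk := hd k.1 k.2
  have h1 : d (ν : ℝ) ^ m ≤ K ^ m * Real.exp ((ν : ℝ) / 2) := by
    calc d (ν : ℝ) ^ m ≤ (K * Real.exp ((ν : ℝ) / (2 * m))) ^ m :=
          pow_le_pow_left₀ (hd0 _) hdk m
      _ = K ^ m * Real.exp ((ν : ℝ) / 2) := by
          rw [mul_pow, ← Real.exp_nat_mul]
          congr 2
          field_simp
  have h2 : d (ν : ℝ) ^ m / Real.exp (ν : ℝ) ≤ K ^ m * Real.exp (-(ν : ℝ) / 2) := by
    rw [show K ^ m * Real.exp (-(ν : ℝ) / 2)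
        = K ^ m * Real.exp ((ν : ℝ) / 2) / Real.exp (ν : ℝ) by
      rw [mul_div_assoc, ← Real.exp_sub]; ring_nf]
    exact div_le_div_of_nonneg_right h1 (Real.exp_pos _).le |>.trans_eq rfl
  exact h2
end

section
/- Let ρ ∈ ℝ satisfy |kρ| ≥ α/Δ(|k|) for all nonzero k ∈ ℤ, and let f : 𝕋¹ → ℬ have absolutely convergent Fourier series with ‖f̂_k‖ ≤ M/Δ̃(|k|), where ∑_{k≠0} 1/Δ̃(|k|) < ∞. Let w̄ be the weight w̄(x) = c·exp(−1/(x(1−x))) normalized so ∫₀¹w̄ = 1. Then there exist ĉ > 0 and C > 0 such that for all sufficiently large T, ‖(1/T)∫₀^T w̄(t/T) f(θ + ρt) dt − ∫_{𝕋¹} f(θ̂)dθ̂‖ ≤ C·exp(−T^{ĉ}), uniformly in θ. -/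
open scoped Real
open Complex

namespace Stmt15Aux

open Polynomial

noncomputable def Q : ℕ → ℝ[X]
  | 0 => 1
  | n+1 => X ^ 2 * (Q n - derivative (Q n))

lemma iteratedDeriv_E (n : ℕ) :
    iteratedDeriv n expNegInvGlue = fun x => (Q n).eval x⁻¹ * expNegInvGlue x := by
  induction n with
  | zero => funext x; simp [Q]
  | succ n ih =>
    funext x
    rw [iteratedDeriv_succ, ih]
    exact (expNegInvGlue.hasDerivAt_polynomial_eval_inv_mul (Q n) x).deriv

lemma Q_natDegree (n : ℕ) : (Q n).natDegree ≤ 2 * n := by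
  induction n with
  | zero => simp [Q]
  | succ n ih =>
    show (X ^ 2 * (Q n - derivative (Q n))).natDegree ≤ 2 * (n+1)
    calc (X ^ 2 * (Q n - derivative (Q n))).natDegree
        ≤ (X ^ 2 : ℝ[X]).natDegree + (Q n - derivative (Q n)).natDegree :=
          natDegree_mul_le
      _ ≤ 2 + max (Q n).natDegree (derivative (Q n)).natDegree := by
          gcongr
          · simp
          · exact natDegree_sub_le _ _
      _ ≤ 2 * (n + 1) := by
          have h1 : (derivative (Q n)).natDegree ≤ 2 * n :=
            le_trans (natDegree_derivative_le _) (by omega)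
          omega

lemma Q_coeff (n : ℕ) (i : ℕ) : |(Q n).coeff i| ≤ (2*(n:ℝ))^n := by
  induction n generalizing i with
  | zero =>
    rcases i with _|i <;> simp [Q, Polynomial.coeff_one]
  | succ n ih =>
    show |(X ^ 2 * (Q n - derivative (Q n))).coeff i| ≤ _
    rw [mul_comm, coeff_mul_X_pow']
    by_cases h2 : 2 ≤ i
    · rw [if_pos h2]
      set j := i - 2 with hj
      rw [coeff_sub, coeff_derivative]
      by_cases hjn : j ≤ 2 * n
      · have hb1 := ih j
        have hb2 := ih (j+1)
        have hc : ((j:ℝ) + 1) ≤ 2*(n:ℝ) + 1 := by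
          have : (j:ℝ) ≤ 2*(n:ℝ) := by exact_mod_cast hjn
          linarith
        have hnn : (0:ℝ) ≤ 2*(n:ℝ) := by positivity
        calc |(Q n).coeff j - (Q n).coeff (j + 1) * ((j:ℝ) + 1)|
            ≤ |(Q n).coeff j| + |(Q n).coeff (j+1)| * ((j:ℝ)+1) := by
              refine (abs_sub _ _).trans ?_
              rw [abs_mul]
              gcongr
              exact le_of_eq (_root_.abs_of_nonneg (by positivity))
          _ ≤ (2*(n:ℝ))^n + (2*(n:ℝ))^n * (2*(n:ℝ)+1) := by
              have h0 : (0:ℝ) ≤ (j:ℝ) + 1 := by positivity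
              nlinarith [abs_nonneg ((Q n).coeff (j+1)), pow_nonneg hnn n]
          _ = (2*(n:ℝ)+2) * (2*(n:ℝ))^n := by ring
          _ ≤ (2*((n:ℝ)+1)) * (2*((n:ℝ)+1))^n := by
              have h1 : (2*(n:ℝ)) ≤ 2*((n:ℝ)+1) := by linarith
              have h2' : (2*(n:ℝ)+2) ≤ 2*((n:ℝ)+1) + 1 := by linarith
              have := pow_le_pow_left₀ hnn h1 n
              nlinarith [pow_nonneg hnn n]
          _ = (2*((n:ℕ)+1:ℝ))^(n+1) := by rw [pow_succ]; ring
          _ = (2*(((n+1):ℕ):ℝ))^(n+1) := by norm_num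
      · have hz1 : (Q n).coeff j = 0 :=
          coeff_eq_zero_of_natDegree_lt (lt_of_le_of_lt (Q_natDegree n) (by omega))
        have hz2 : (Q n).coeff (j+1) = 0 :=
          coeff_eq_zero_of_natDegree_lt (lt_of_le_of_lt (Q_natDegree n) (by omega))
        rw [hz1, hz2]
        simpa using by positivity
    · rw [if_neg h2]
      simpa using by positivity
noncomputable def S (n : ℕ) : ℝ := (2*(n:ℝ)+1) * (2*(n:ℝ))^(3*n)

lemma S_nonneg (n : ℕ) : 0 ≤ S n := by unfold S; positivity

lemma Q_eval_le (n : ℕ) {y : ℝ} (hy : 0 ≤ y) :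
    |(Q n).eval y| ≤ (2*(n:ℝ)+1) * (2*(n:ℝ))^n * max 1 y ^ (2*n) := by
  have hmax : (1:ℝ) ≤ max 1 y := le_max_left _ _
  rw [Polynomial.eval_eq_sum_range]
  calc |∑ i ∈ Finset.range ((Q n).natDegree + 1), (Q n).coeff i * y ^ i|
      ≤ ∑ i ∈ Finset.range ((Q n).natDegree + 1), |(Q n).coeff i * y ^ i| :=
        Finset.abs_sum_le_sum_abs _ _
    _ ≤ ∑ _i ∈ Finset.range ((Q n).natDegree + 1), (2*(n:ℝ))^n * max 1 y ^ (2*n) := by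
        apply Finset.sum_le_sum
        intro i hi
        have hi' : i ≤ 2 * n := le_trans (Nat.lt_succ_iff.mp (Finset.mem_range.mp hi)) (Q_natDegree n)
        rw [abs_mul]
        have h1 : |y ^ i| ≤ max 1 y ^ (2*n) := by
          rw [_root_.abs_pow, _root_.abs_of_nonneg hy]
          calc y ^ i ≤ max 1 y ^ i := pow_le_pow_left₀ hy (le_max_right _ _) i
            _ ≤ max 1 y ^ (2*n) := pow_le_pow_right₀ hmax hi'
        exact mul_le_mul (Q_coeff n i) h1 (abs_nonneg _) (by positivity)
    _ ≤ (2*(n:ℝ)+1) * (2*(n:ℝ))^n * max 1 y ^ (2*n) := by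
        rw [Finset.sum_const, Finset.card_range, nsmul_eq_mul]
        have hd : (((Q n).natDegree + 1 : ℕ) : ℝ) ≤ 2*(n:ℝ)+1 := by
          have : ((Q n).natDegree : ℝ) ≤ 2*(n:ℝ) := by exact_mod_cast Q_natDegree n
          push_cast; linarith
        calc (((Q n).natDegree + 1 : ℕ):ℝ) * ((2*(n:ℝ))^n * max 1 y ^ (2*n))
            ≤ (2*(n:ℝ)+1) * ((2*(n:ℝ))^n * max 1 y ^ (2*n)) :=
              mul_le_mul_of_nonneg_right hd (by positivity)
          _ = (2*(n:ℝ)+1) * (2*(n:ℝ))^n * max 1 y ^ (2*n) := by ring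

lemma max_pow_mul_exp_le (m : ℕ) {y : ℝ} (hy : 0 ≤ y) :
    (max 1 y)^m * Real.exp (-y) ≤ (m:ℝ)^m := by
  have hm1 : (1:ℝ) ≤ (m:ℝ)^m := by
    rcases Nat.eq_zero_or_pos m with rfl | hm
    · simp
    · exact one_le_pow₀ (by exact_mod_cast hm)
  rcases le_total y 1 with h | h
  · rw [max_eq_left h]
    have := Real.exp_le_one_iff.mpr (neg_nonpos.mpr hy)
    calc (1:ℝ)^m * Real.exp (-y) ≤ 1 := by simpa using this
      _ ≤ (m:ℝ)^m := hm1
  · rw [max_eq_right h]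
    rcases Nat.eq_zero_or_pos m with rfl | hm
    · simpa using Real.exp_le_one_iff.mpr (neg_nonpos.mpr hy)
    · have hmR : (0:ℝ) < m := by exact_mod_cast hm
      have key : y ≤ (m:ℝ) * Real.exp (y / m) := by
        have h1 : y / m ≤ Real.exp (y / m) := by
          have := Real.add_one_le_exp (y / m)
          linarith [div_nonneg hy hmR.le]
        calc y = (m:ℝ) * (y / m) := by field_simp
          _ ≤ (m:ℝ) * Real.exp (y / m) := by
              exact mul_le_mul_of_nonneg_left h1 hmR.le
      have hyp : y ^ m ≤ ((m:ℝ) * Real.exp (y / m)) ^ m :=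
        pow_le_pow_left₀ hy key m
      have hexp : (Real.exp (y / m)) ^ m = Real.exp y := by
        rw [← Real.exp_nat_mul]
        congr 1
        field_simp
      rw [mul_pow, hexp] at hyp
      calc y ^ m * Real.exp (-y) ≤ (m:ℝ)^m * Real.exp y * Real.exp (-y) := by
            exact mul_le_mul_of_nonneg_right hyp (Real.exp_nonneg _)
        _ = (m:ℝ)^m := by rw [mul_assoc, ← Real.exp_add]; simp

lemma E_bound (n : ℕ) (x : ℝ) : |iteratedDeriv n expNegInvGlue x| ≤ S n := by
  simp only [iteratedDeriv_E]
  rcases le_or_gt x 0 with h | h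
  · simp [expNegInvGlue.zero_of_nonpos h, S_nonneg n]
  · have hx : expNegInvGlue x = Real.exp (-x⁻¹) := by
      simp [expNegInvGlue, not_le.mpr h]
    have hy : 0 ≤ x⁻¹ := by positivity
    rw [hx, abs_mul, _root_.abs_of_nonneg (Real.exp_nonneg _)]
    calc |(Q n).eval x⁻¹| * Real.exp (-x⁻¹)
        ≤ ((2*(n:ℝ)+1) * (2*(n:ℝ))^n * max 1 x⁻¹ ^ (2*n)) * Real.exp (-x⁻¹) :=
          mul_le_mul_of_nonneg_right (Q_eval_le n hy) (Real.exp_nonneg _)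
      _ = (2*(n:ℝ)+1) * (2*(n:ℝ))^n * (max 1 x⁻¹ ^ (2*n) * Real.exp (-x⁻¹)) := by ring
      _ ≤ (2*(n:ℝ)+1) * (2*(n:ℝ))^n * ((2*n:ℕ):ℝ)^(2*n) := by
          refine mul_le_mul_of_nonneg_left (max_pow_mul_exp_le (2*n) hy) (by positivity)
      _ = S n := by
          unfold S
          push_cast
          rw [show 3*n = n + 2*n by ring, pow_add]
          ring

lemma E_zero_of_nonpos {x : ℝ} (hx : x ≤ 0) (n : ℕ) : iteratedDeriv n expNegInvGlue x = 0 := by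
  simp only [iteratedDeriv_E]
  simp [expNegInvGlue.zero_of_nonpos hx]
lemma wbar_eq : wbar = fun x => cbar * (expNegInvGlue x * expNegInvGlue (1 - x)) := by
  funext x
  unfold wbar
  by_cases h : 0 < x ∧ x < 1
  · rw [if_pos h]
    obtain ⟨h0, h1⟩ := h
    have hx : expNegInvGlue x = Real.exp (-x⁻¹) := by simp [expNegInvGlue, not_le.mpr h0]
    have hx2 : expNegInvGlue (1 - x) = Real.exp (-(1-x)⁻¹) := by
      simp [expNegInvGlue, not_le.mpr (by linarith : (0:ℝ) < 1 - x)]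
    rw [hx, hx2, ← Real.exp_add]
    congr 2
    have hne : x ≠ 0 := ne_of_gt h0
    have hne2 : (1:ℝ) - x ≠ 0 := by intro h; apply absurd h1; intro _; linarith [h]
    field_simp
    ring
  · rw [if_neg h]
    push_neg at h
    rcases le_or_gt x 0 with hx | hx
    · rw [expNegInvGlue.zero_of_nonpos hx]; ring
    · have := h hx
      rw [expNegInvGlue.zero_of_nonpos (by linarith : (1:ℝ) - x ≤ 0)]; ring

lemma wbar_contDiff {n : ℕ∞} : ContDiff ℝ n wbar := by
  rw [wbar_eq]
  exact contDiff_const.mul (expNegInvGlue.contDiff.mul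
    (expNegInvGlue.contDiff.comp (contDiff_const.sub contDiff_id)))

lemma integrand_integrable : IntervalIntegrable
    (fun s => Real.exp (-(s * (1 - s))⁻¹)) MeasureTheory.volume 0 1 := by
  rw [intervalIntegrable_iff]
  haveI : MeasureTheory.IsFiniteMeasure (MeasureTheory.volume.restrict (Set.uIoc (0:ℝ) 1)) := by
    constructor
    rw [MeasureTheory.Measure.restrict_apply_univ, Set.uIoc_of_le (by norm_num : (0:ℝ) ≤ 1)]
    exact measure_Ioc_lt_top
  apply MeasureTheory.Integrable.mono' (MeasureTheory.integrable_const 1)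
  · refine Measurable.aestronglyMeasurable ?_
    exact (((measurable_id.mul (measurable_const.sub measurable_id)).inv).neg).exp
  · filter_upwards [MeasureTheory.ae_restrict_mem measurableSet_uIoc] with s hs
    rw [Set.uIoc_of_le (by norm_num : (0:ℝ) ≤ 1)] at hs
    rw [Real.norm_eq_abs, _root_.abs_of_nonneg (Real.exp_nonneg _)]
    rw [Real.exp_le_one_iff]
    simp only [neg_nonpos]
    have : 0 ≤ s * (1 - s) := mul_nonneg hs.1.le (by linarith [hs.2])
    positivity

lemma integral_exp_pos : 0 < ∫ s in (0:ℝ)..1, Real.exp (-(s * (1 - s))⁻¹) := by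
  apply intervalIntegral.intervalIntegral_pos_of_pos_on integrand_integrable
  · intro x _; exact Real.exp_pos _
  · norm_num

lemma cbar_pos : 0 < cbar := inv_pos.mpr integral_exp_pos

lemma wbar_nonneg (x : ℝ) : 0 ≤ wbar x := by
  rw [wbar_eq]
  exact mul_nonneg cbar_pos.le (mul_nonneg (expNegInvGlue.nonneg _) (expNegInvGlue.nonneg _))

lemma wbar_le_cbar (x : ℝ) : wbar x ≤ cbar := by
  unfold wbar
  by_cases h : 0 < x ∧ x < 1
  · rw [if_pos h]
    have h1 : Real.exp (-(x * (1 - x))⁻¹) ≤ 1 := by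
      rw [Real.exp_le_one_iff, neg_nonpos]
      have : 0 ≤ x * (1 - x) := mul_nonneg h.1.le (by linarith [h.2])
      positivity
    nlinarith [cbar_pos]
  · rw [if_neg h]; exact cbar_pos.le

lemma abs_wbar_le (x : ℝ) : |wbar x| ≤ cbar := by
  rw [_root_.abs_of_nonneg (wbar_nonneg x)]; exact wbar_le_cbar x

lemma wbar_integral_one : ∫ s in (0:ℝ)..1, wbar s = 1 := by
  have hae : ∀ᵐ x : ℝ, x ≠ 1 := by
    rw [MeasureTheory.ae_iff]
    convert MeasureTheory.measure_singleton (1:ℝ)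
    · ext x; simp
    · infer_instance
  have hcong : ∫ s in (0:ℝ)..1, wbar s
      = ∫ s in (0:ℝ)..1, cbar * Real.exp (-(s * (1 - s))⁻¹) := by
    apply intervalIntegral.integral_congr_ae
    filter_upwards [hae] with x hx hxI
    rw [Set.uIoc_of_le (by norm_num : (0:ℝ) ≤ 1)] at hxI
    have : 0 < x ∧ x < 1 := ⟨hxI.1, lt_of_le_of_ne hxI.2 hx⟩
    unfold wbar
    rw [if_pos this]
  rw [hcong, intervalIntegral.integral_const_mul]
  unfold cbar
  rw [inv_mul_cancel₀ integral_exp_pos.ne']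
lemma wbar_eqOn_Iio (n : ℕ) : Set.EqOn (iteratedDeriv n wbar) 0 (Set.Iio 0) := by
  induction n with
  | zero =>
    intro x hx
    simp only [iteratedDeriv_zero, Pi.zero_apply]
    unfold wbar
    rw [if_neg]
    rintro ⟨h0, _⟩
    exact absurd hx.out (not_lt.mpr h0.le)
  | succ n ih =>
    intro x hx
    rw [iteratedDeriv_succ]
    have heq : iteratedDeriv n wbar =ᶠ[nhds x] (fun _ => (0:ℝ)) :=
      Filter.eventuallyEq_of_mem (Iio_mem_nhds hx.out) ih
    rw [heq.deriv_eq, deriv_const]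
    rfl

lemma wbar_eqOn_Ioi (n : ℕ) : Set.EqOn (iteratedDeriv n wbar) 0 (Set.Ioi 1) := by
  induction n with
  | zero =>
    intro x hx
    simp only [iteratedDeriv_zero, Pi.zero_apply]
    unfold wbar
    rw [if_neg]
    rintro ⟨_, h1⟩
    exact absurd hx.out (not_lt.mpr h1.le)
  | succ n ih =>
    intro x hx
    rw [iteratedDeriv_succ]
    have heq : iteratedDeriv n wbar =ᶠ[nhds x] (fun _ => (0:ℝ)) :=
      Filter.eventuallyEq_of_mem (Ioi_mem_nhds hx.out) ih
    rw [heq.deriv_eq, deriv_const]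
    rfl

lemma iteratedDeriv_wbar_continuous (n : ℕ) : Continuous (iteratedDeriv n wbar) :=
  (wbar_contDiff (n := ⊤)).continuous_iteratedDeriv n (by exact_mod_cast le_top)

lemma iteratedDeriv_wbar_zero (n : ℕ) : iteratedDeriv n wbar 0 = 0 := by
  have h := (wbar_eqOn_Iio n).closure (iteratedDeriv_wbar_continuous n) continuous_const
  rw [closure_Iio] at h
  exact h (by simp : (0:ℝ) ∈ Set.Iic 0)

lemma iteratedDeriv_wbar_one (n : ℕ) : iteratedDeriv n wbar 1 = 0 := by
  have h := (wbar_eqOn_Ioi n).closure (iteratedDeriv_wbar_continuous n) continuous_const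
  rw [closure_Ioi] at h
  exact h (by simp : (1:ℝ) ∈ Set.Ici 1)

lemma iteratedDeriv_cmul {f : ℝ → ℝ} (hf : ContDiff ℝ (⊤:ℕ∞) f) (c : ℝ) (n : ℕ) :
    iteratedDeriv n (fun x => c * f x) = fun x => c * iteratedDeriv n f x := by
  induction n with
  | zero => simp
  | succ n ih =>
    funext x
    rw [iteratedDeriv_succ, ih, iteratedDeriv_succ]
    apply deriv_const_mul
    exact (hf.differentiable_iteratedDeriv n (by
      exact_mod_cast WithTop.coe_lt_top n)).differentiableAt

lemma iteratedDeriv_comp_const_sub' (n : ℕ) (f : ℝ → ℝ) (c : ℝ) :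
    iteratedDeriv n (fun x => f (c - x)) = fun x => (-1:ℝ)^n * iteratedDeriv n f (c - x) := by
  induction n generalizing f with
  | zero => simp
  | succ n ih =>
    funext x
    rw [iteratedDeriv_succ']
    have h1 : deriv (fun x => f (c - x)) = fun x => -((deriv f) (c - x)) :=
      funext fun x => deriv_comp_const_sub f c x
    rw [h1]
    have h2 : iteratedDeriv n (fun x => -((deriv f) (c - x))) x
        = -(iteratedDeriv n (fun x => (deriv f) (c - x)) x) := iteratedDeriv_neg n _ x
    rw [h2, ih (deriv f)]
    rw [← iteratedDeriv_succ']
    ring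

lemma refl_bound (n : ℕ) (a : ℝ) :
    |iteratedDeriv n (fun x => expNegInvGlue (1 - x)) a| ≤ S n := by
  rw [iteratedDeriv_comp_const_sub']
  rw [abs_mul, _root_.abs_pow, abs_neg, abs_one, one_pow, one_mul]
  exact E_bound n (1 - a)

noncomputable def Dn (n : ℕ) : ℝ := cbar * ((2*(n:ℝ)+1)^2 * (2*(n:ℝ))^(3*n) * 2^n)

lemma S_mul_le {i n : ℕ} (h : i ≤ n) :
    S i * S (n - i) ≤ (2*(n:ℝ)+1)^2 * (2*(n:ℝ))^(3*n) := by
  set j := n - i with hj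
  have hij : i + j = n := by omega
  have hIn : (i:ℝ) ≤ n := by exact_mod_cast h
  have hJn : (j:ℝ) ≤ n := by exact_mod_cast (by omega : j ≤ n)
  have h2i : (0:ℝ) ≤ 2*(i:ℝ) := by positivity
  have h2j : (0:ℝ) ≤ 2*(j:ℝ) := by positivity
  have hp1 : (2*(i:ℝ))^(3*i) ≤ (2*(n:ℝ))^(3*i) := pow_le_pow_left₀ h2i (by linarith) _
  have hp2 : (2*(j:ℝ))^(3*j) ≤ (2*(n:ℝ))^(3*j) := pow_le_pow_left₀ h2j (by linarith) _
  have hpow : (2*(i:ℝ))^(3*i) * (2*(j:ℝ))^(3*j) ≤ (2*(n:ℝ))^(3*n) := by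
    calc (2*(i:ℝ))^(3*i) * (2*(j:ℝ))^(3*j)
        ≤ (2*(n:ℝ))^(3*i) * (2*(n:ℝ))^(3*j) :=
          mul_le_mul hp1 hp2 (by positivity) (by positivity)
      _ = (2*(n:ℝ))^(3*i + 3*j) := (pow_add _ _ _).symm
      _ = (2*(n:ℝ))^(3*n) := by congr 1; omega
  have hc : (2*(i:ℝ)+1) * (2*(j:ℝ)+1) ≤ (2*(n:ℝ)+1)^2 := by nlinarith
  unfold S
  calc (2*(i:ℝ)+1) * (2*(i:ℝ))^(3*i) * ((2*(j:ℝ)+1) * (2*(j:ℝ))^(3*j))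
      = ((2*(i:ℝ)+1) * (2*(j:ℝ)+1)) * ((2*(i:ℝ))^(3*i) * (2*(j:ℝ))^(3*j)) := by ring
    _ ≤ (2*(n:ℝ)+1)^2 * (2*(n:ℝ))^(3*n) :=
        mul_le_mul hc hpow (by positivity) (by positivity)

lemma wbar_deriv_bound (n : ℕ) (x : ℝ) : |iteratedDeriv n wbar x| ≤ Dn n := by
  have hg1 : ContDiff ℝ ((⊤:ℕ∞):WithTop ℕ∞) expNegInvGlue := expNegInvGlue.contDiff
  have hg2 : ContDiff ℝ ((⊤:ℕ∞):WithTop ℕ∞) (fun x : ℝ => expNegInvGlue (1 - x)) :=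
    expNegInvGlue.contDiff.comp (contDiff_const.sub contDiff_id)
  have hG : ContDiff ℝ ((⊤:ℕ∞):WithTop ℕ∞) (fun x : ℝ => expNegInvGlue x * expNegInvGlue (1 - x)) :=
    hg1.mul hg2
  have hwb : iteratedDeriv n wbar x
      = cbar * iteratedDeriv n (fun x => expNegInvGlue x * expNegInvGlue (1 - x)) x := by
    rw [wbar_eq, iteratedDeriv_cmul hG cbar n]
  rw [hwb, abs_mul, _root_.abs_of_nonneg cbar_pos.le]
  unfold Dn
  rw [mul_comm ((2*(n:ℝ)+1)^2 * (2*(n:ℝ))^(3*n)) (2^n)]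
  apply mul_le_mul_of_nonneg_left _ cbar_pos.le
  have hnorm : |iteratedDeriv n (fun x => expNegInvGlue x * expNegInvGlue (1 - x)) x|
      = ‖iteratedFDeriv ℝ n (fun x => expNegInvGlue x * expNegInvGlue (1 - x)) x‖ := by
    rw [norm_iteratedFDeriv_eq_norm_iteratedDeriv, Real.norm_eq_abs]
  rw [hnorm]
  calc ‖iteratedFDeriv ℝ n (fun x => expNegInvGlue x * expNegInvGlue (1 - x)) x‖
      ≤ ∑ i ∈ Finset.range (n + 1), (n.choose i : ℝ)
          * ‖iteratedFDeriv ℝ i expNegInvGlue x‖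
          * ‖iteratedFDeriv ℝ (n - i) (fun x : ℝ => expNegInvGlue (1 - x)) x‖ :=
        norm_iteratedFDeriv_mul_le hg1 hg2 x (by exact_mod_cast le_top)
    _ ≤ ∑ i ∈ Finset.range (n + 1), (n.choose i : ℝ)
          * ((2*(n:ℝ)+1)^2 * (2*(n:ℝ))^(3*n)) := by
        apply Finset.sum_le_sum
        intro i hi
        have hin : i ≤ n := Nat.lt_succ_iff.mp (Finset.mem_range.mp hi)
        rw [mul_assoc]
        apply mul_le_mul_of_nonneg_left _ (by positivity)
        have e1 : ‖iteratedFDeriv ℝ i expNegInvGlue x‖ ≤ S i := by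
          rw [norm_iteratedFDeriv_eq_norm_iteratedDeriv, Real.norm_eq_abs]
          exact E_bound i x
        have e2 : ‖iteratedFDeriv ℝ (n - i) (fun x : ℝ => expNegInvGlue (1 - x)) x‖
            ≤ S (n - i) := by
          rw [norm_iteratedFDeriv_eq_norm_iteratedDeriv, Real.norm_eq_abs]
          exact refl_bound (n - i) x
        calc ‖iteratedFDeriv ℝ i expNegInvGlue x‖
              * ‖iteratedFDeriv ℝ (n - i) (fun x : ℝ => expNegInvGlue (1 - x)) x‖
            ≤ S i * S (n - i) := mul_le_mul e1 e2 (norm_nonneg _) (S_nonneg i)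
          _ ≤ (2*(n:ℝ)+1)^2 * (2*(n:ℝ))^(3*n) := S_mul_le hin
    _ = (∑ i ∈ Finset.range (n + 1), (n.choose i : ℝ))
          * ((2*(n:ℝ)+1)^2 * (2*(n:ℝ))^(3*n)) := by
        rw [← Finset.sum_mul]
    _ = 2^n * ((2*(n:ℝ)+1)^2 * (2*(n:ℝ))^(3*n)) := by
        congr 1
        rw [← Nat.cast_sum]
        rw [Nat.sum_range_choose]
        push_cast
        ring
lemma Wderiv (n : ℕ) (x : ℝ) :
    HasDerivAt (iteratedDeriv n wbar) (iteratedDeriv (n+1) wbar x) x := by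
  have hd : DifferentiableAt ℝ (iteratedDeriv n wbar) x :=
    ((wbar_contDiff (n := ⊤)).differentiable_iteratedDeriv n
      (by exact_mod_cast WithTop.coe_lt_top n)).differentiableAt
  rw [iteratedDeriv_succ]
  exact hd.hasDerivAt

lemma ibp_key (a : ℝ) (ha : a ≠ 0) (n : ℕ) :
    (∫ s in (0:ℝ)..1, ((iteratedDeriv n wbar s : ℝ) : ℂ) * Complex.exp ((a:ℂ) * s * Complex.I))
      = -((a:ℂ) * Complex.I)⁻¹ *
        ∫ s in (0:ℝ)..1, ((iteratedDeriv (n+1) wbar s : ℝ) : ℂ)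
          * Complex.exp ((a:ℂ) * s * Complex.I) := by
  have haI : (a:ℂ) * Complex.I ≠ 0 :=
    mul_ne_zero (Complex.ofReal_ne_zero.mpr ha) Complex.I_ne_zero
  have hv : ∀ x ∈ Set.uIcc (0:ℝ) 1,
      HasDerivAt (fun s : ℝ => ((a:ℂ)*Complex.I)⁻¹ * Complex.exp ((a:ℂ)*s*Complex.I))
        (Complex.exp ((a:ℂ)*x*Complex.I)) x := by
    intro x _
    have h1 : HasDerivAt (fun s : ℝ => ((s:ℝ):ℂ)) 1 x := by
      simpa using (hasDerivAt_id x).ofReal_comp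
    have h2 : HasDerivAt (fun s : ℝ => (a:ℂ)*s*Complex.I) ((a:ℂ)*Complex.I) x := by
      have := (h1.const_mul (a:ℂ)).mul_const Complex.I
      simpa using this
    have h4 := (h2.cexp).const_mul (((a:ℂ)*Complex.I)⁻¹)
    rw [mul_left_comm, inv_mul_cancel₀ haI, mul_one] at h4
    exact h4
  have hu : ∀ x ∈ Set.uIcc (0:ℝ) 1,
      HasDerivAt (fun s : ℝ => ((iteratedDeriv n wbar s : ℝ):ℂ))
        ((iteratedDeriv (n+1) wbar x : ℝ):ℂ) x :=
    fun x _ => (Wderiv n x).ofReal_comp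
  have hu' : IntervalIntegrable (fun s : ℝ => ((iteratedDeriv (n+1) wbar s : ℝ):ℂ))
      MeasureTheory.volume 0 1 :=
    (Complex.continuous_ofReal.comp (iteratedDeriv_wbar_continuous (n+1))).intervalIntegrable _ _
  have hv' : IntervalIntegrable (fun s : ℝ => Complex.exp ((a:ℂ)*s*Complex.I))
      MeasureTheory.volume 0 1 :=
    (Complex.continuous_exp.comp (by continuity)).intervalIntegrable _ _
  have hibp := intervalIntegral.integral_mul_deriv_eq_deriv_mul hu hv hu' hv'
  rw [hibp, iteratedDeriv_wbar_one n, iteratedDeriv_wbar_zero n]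
  have hre : (fun s : ℝ => ((iteratedDeriv (n+1) wbar s : ℝ):ℂ)
        * (((a:ℂ)*Complex.I)⁻¹ * Complex.exp ((a:ℂ)*s*Complex.I)))
      = fun s : ℝ => ((a:ℂ)*Complex.I)⁻¹ * (((iteratedDeriv (n+1) wbar s : ℝ):ℂ)
        * Complex.exp ((a:ℂ)*s*Complex.I)) := by
    funext s; ring
  rw [hre, intervalIntegral.integral_const_mul]
  simp

lemma osc_eq (a : ℝ) (ha : a ≠ 0) (n : ℕ) :
    ‖∫ s in (0:ℝ)..1, ((wbar s : ℝ):ℂ) * Complex.exp ((a:ℂ) * s * Complex.I)‖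
      = (|a|⁻¹) ^ n *
        ‖∫ s in (0:ℝ)..1, ((iteratedDeriv n wbar s : ℝ):ℂ)
          * Complex.exp ((a:ℂ) * s * Complex.I)‖ := by
  induction n with
  | zero => simp
  | succ n ih =>
    rw [ih, ibp_key a ha n]
    rw [norm_mul, norm_neg, norm_inv, norm_mul, Complex.norm_I, mul_one,
      Complex.norm_real, Real.norm_eq_abs, pow_succ]
    ring

lemma osc_le (a : ℝ) (ha : a ≠ 0) (n : ℕ) :
    ‖∫ s in (0:ℝ)..1, ((wbar s : ℝ):ℂ) * Complex.exp ((a:ℂ) * s * Complex.I)‖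
      ≤ (|a|⁻¹) ^ n * Dn n := by
  rw [osc_eq a ha n]
  apply mul_le_mul_of_nonneg_left _ (by positivity)
  have hb : ∀ x ∈ Set.uIoc (0:ℝ) 1,
      ‖((iteratedDeriv n wbar x : ℝ):ℂ) * Complex.exp ((a:ℂ) * x * Complex.I)‖ ≤ Dn n := by
    intro x _
    rw [norm_mul, Complex.norm_real, Real.norm_eq_abs]
    have he : ‖Complex.exp ((a:ℂ) * x * Complex.I)‖ = 1 := by
      rw [Complex.norm_exp]
      norm_num [Complex.mul_re, Complex.mul_im]
    rw [he, mul_one]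
    exact wbar_deriv_bound n x
  have := intervalIntegral.norm_integral_le_of_norm_le_const hb
  simpa using this

lemma Dn_le (n : ℕ) : Dn n ≤ cbar * (144 * (n:ℝ)^3)^n := by
  unfold Dn
  apply mul_le_mul_of_nonneg_left _ cbar_pos.le
  have h1 : (2*(n:ℝ)+1)^2 ≤ 9^n := by
    induction n with
    | zero => norm_num
    | succ n ih =>
      have h2 : (2*((n:ℕ)+1:ℝ)+1)^2 ≤ 9 * (2*(n:ℝ)+1)^2 := by
        push_cast; nlinarith [Nat.cast_nonneg (α := ℝ) n]
      calc (2*(((n+1):ℕ):ℝ)+1)^2 = (2*((n:ℕ)+1:ℝ)+1)^2 := by norm_num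
        _ ≤ 9 * (2*(n:ℝ)+1)^2 := h2
        _ ≤ 9 * 9^n := by nlinarith [ih]
        _ = 9^(n+1) := by rw [pow_succ]; ring
  have h2 : (2*(n:ℝ))^(3*n) = 8^n * ((n:ℝ)^3)^n := by
    rw [mul_pow, pow_mul, pow_mul]
    norm_num
  calc (2*(n:ℝ)+1)^2 * (2*(n:ℝ))^(3*n) * 2^n
      ≤ 9^n * (2*(n:ℝ))^(3*n) * 2^n := by
        apply mul_le_mul_of_nonneg_right (mul_le_mul_of_nonneg_right h1 (by positivity))
        positivity
    _ = 9^n * (8^n * ((n:ℝ)^3)^n) * 2^n := by rw [h2]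
    _ = (144 * (n:ℝ)^3)^n := by
        rw [mul_pow]
        rw [show (144:ℝ)^n = 9^n * 8^n * 2^n by rw [← mul_pow, ← mul_pow]; norm_num]
        ring

lemma osc_decay {a : ℝ} (ha : (144 * Real.exp 1)^2 ≤ |a|) :
    ‖∫ s in (0:ℝ)..1, ((wbar s : ℝ):ℂ) * Complex.exp ((a:ℂ) * s * Complex.I)‖
      ≤ (cbar * Real.exp 1) * Real.exp (-(|a| ^ ((6:ℝ))⁻¹)) := by
  set K : ℝ := 144 * Real.exp 1 with hK
  have hKpos : 0 < K := by positivity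
  have hapos : 0 < |a| := lt_of_lt_of_le (by positivity) ha
  have ha0 : a ≠ 0 := by intro h; rw [h] at hapos; simp at hapos
  set x : ℝ := (|a| / K) ^ ((3:ℝ))⁻¹ with hx
  have hxnn : 0 ≤ x := Real.rpow_nonneg (by positivity) _
  set n : ℕ := ⌊x⌋₊ with hn
  have hcube : (n:ℝ)^3 ≤ |a| / K := by
    have h1 : (n:ℝ) ≤ x := Nat.floor_le hxnn
    have h2 : (n:ℝ)^3 ≤ x^3 := pow_le_pow_left₀ (Nat.cast_nonneg n) h1 3
    calc (n:ℝ)^3 ≤ x^3 := h2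
      _ = ((|a| / K) ^ ((3:ℝ))⁻¹)^(3:ℕ) := rfl
      _ = |a| / K := by
          rw [← Real.rpow_natCast (((|a| / K) ^ ((3:ℝ))⁻¹)) 3, ← Real.rpow_mul (by positivity)]
          norm_num
  have hmain : ‖∫ s in (0:ℝ)..1, ((wbar s : ℝ):ℂ) * Complex.exp ((a:ℂ) * s * Complex.I)‖
      ≤ cbar * Real.exp (-(n:ℝ)) := by
    calc ‖∫ s in (0:ℝ)..1, ((wbar s : ℝ):ℂ) * Complex.exp ((a:ℂ) * s * Complex.I)‖
        ≤ (|a|⁻¹) ^ n * Dn n := osc_le a ha0 n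
      _ ≤ (|a|⁻¹) ^ n * (cbar * (144 * (n:ℝ)^3)^n) := by
          apply mul_le_mul_of_nonneg_left (Dn_le n) (by positivity)
      _ = cbar * (144 * (n:ℝ)^3 / |a|)^n := by
          rw [div_pow, inv_pow, div_eq_mul_inv]
          ring
      _ ≤ cbar * Real.exp (-(n:ℝ)) := by
          apply mul_le_mul_of_nonneg_left _ cbar_pos.le
          have hq : 144 * (n:ℝ)^3 / |a| ≤ Real.exp (-1) := by
            rw [Real.exp_neg]
            rw [div_le_iff₀ hapos]
            have : 144 * ((n:ℝ)^3) ≤ 144 * (|a| / K) :=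
              mul_le_mul_of_nonneg_left hcube (by norm_num)
            calc 144 * (n:ℝ)^3 ≤ 144 * (|a| / K) := this
              _ = (Real.exp 1)⁻¹ * |a| := by
                  rw [hK]
                  rw [div_eq_mul_inv, mul_inv]
                  ring
          have hqnn : 0 ≤ 144 * (n:ℝ)^3 / |a| := by positivity
          calc (144 * (n:ℝ)^3 / |a|)^n ≤ (Real.exp (-1))^n :=
                pow_le_pow_left₀ hqnn hq n
            _ = Real.exp (-(n:ℝ)) := by
                rw [← Real.exp_nat_mul]
                norm_num
  have hxlt : x < (n:ℝ) + 1 := Nat.lt_floor_add_one x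
  have hKle : K ≤ |a| ^ ((2:ℝ))⁻¹ := by
    have h := Real.rpow_le_rpow (by positivity : (0:ℝ) ≤ K^2) ha
      (by norm_num : (0:ℝ) ≤ (2:ℝ)⁻¹)
    calc K = (K^(2:ℕ)) ^ ((2:ℝ))⁻¹ := by
          rw [← Real.rpow_natCast K 2, ← Real.rpow_mul hKpos.le]
          norm_num
      _ ≤ |a| ^ ((2:ℝ))⁻¹ := h
  have hdivge : |a| ^ ((2:ℝ))⁻¹ ≤ |a| / K := by
    rw [le_div_iff₀ hKpos]
    calc |a| ^ ((2:ℝ))⁻¹ * K ≤ |a| ^ ((2:ℝ))⁻¹ * |a| ^ ((2:ℝ))⁻¹ :=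
          mul_le_mul_of_nonneg_left hKle (Real.rpow_nonneg hapos.le _)
      _ = |a| := by
          rw [← Real.rpow_add hapos]
          norm_num
  have hsx : |a| ^ ((6:ℝ))⁻¹ ≤ x := by
    calc |a| ^ ((6:ℝ))⁻¹ = (|a| ^ ((2:ℝ))⁻¹) ^ ((3:ℝ))⁻¹ := by
          rw [← Real.rpow_mul hapos.le]
          norm_num
      _ ≤ (|a| / K) ^ ((3:ℝ))⁻¹ :=
          Real.rpow_le_rpow (Real.rpow_nonneg hapos.le _) hdivge (by norm_num)
  calc ‖∫ s in (0:ℝ)..1, ((wbar s : ℝ):ℂ) * Complex.exp ((a:ℂ) * s * Complex.I)‖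
      ≤ cbar * Real.exp (-(n:ℝ)) := hmain
    _ ≤ cbar * Real.exp (1 - x) := by
        apply mul_le_mul_of_nonneg_left _ cbar_pos.le
        apply Real.exp_le_exp.mpr
        linarith
    _ ≤ cbar * Real.exp (1 - |a| ^ ((6:ℝ))⁻¹) := by
        apply mul_le_mul_of_nonneg_left _ cbar_pos.le
        apply Real.exp_le_exp.mpr
        linarith
    _ = (cbar * Real.exp 1) * Real.exp (-(|a| ^ ((6:ℝ))⁻¹)) := by
        rw [show (1 - |a| ^ ((6:ℝ))⁻¹) = 1 + -(|a| ^ ((6:ℝ))⁻¹) by ring, Real.exp_add]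
        ring
end Stmt15Aux

open Stmt15Aux MeasureTheory

/-- exponential convergence of the continuous-time weighted Birkhoff
average on the circle `𝕋¹` with the bump weight `w̄`, for `ρ` nonresonant and
Fourier coefficients with `∑_{k≠0} 1/Δ̃(|k|) < ∞`. -/
theorem stmt15
    {B : Type*} [NormedAddCommGroup B] [NormedSpace ℂ B] [CompleteSpace B]
    (f : ℝ → B) (fhat : ℤ → B)
    (hf : ∀ θ : ℝ,
      HasSum (fun k : ℤ => Complex.exp (2 * π * Complex.I * k * θ) • fhat k) (f θ))
    (Δ Δt : ℝ → ℝ)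
    (hΔmono : StrictMonoOn Δ (Set.Ici 1)) (hΔge : ∀ x ≥ (1:ℝ), 1 ≤ Δ x)
    (hΔtmono : StrictMonoOn Δt (Set.Ici 1)) (hΔtge : ∀ x ≥ (1:ℝ), 1 ≤ Δt x)
    (M : ℝ) (hM : 0 < M)
    (hdecay : ∀ k : ℤ, k ≠ 0 → ‖fhat k‖ ≤ M / Δt |(k : ℝ)|)
    (hsum : Summable (fun k : {k : ℤ // k ≠ 0} => 1 / Δt |((k : ℤ) : ℝ)|))
    (α : ℝ) (hα : 0 < α) (ρ : ℝ)
    (hρ : ∀ k : ℤ, k ≠ 0 → α / Δ |(k : ℝ)| ≤ |(k : ℝ) * ρ|) :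
    ∃ chat C T₀ : ℝ, 0 < chat ∧ 0 < C ∧
      ∀ T : ℝ, T₀ ≤ T → ∀ θ : ℝ,
        ‖((T : ℂ))⁻¹ • (∫ t in (0:ℝ)..T, ((wbar (t / T) : ℝ) : ℂ) • f (θ + ρ * t)) -
          fhat 0‖ ≤ C * Real.exp (-T ^ chat) := by
  classical
  have hπ := Real.pi_pos
  have hρ0 : ρ ≠ 0 := by
    intro h
    have h1 := hρ 1 one_ne_zero
    rw [h] at h1
    have hΔ1 : (1:ℝ) ≤ Δ |((1:ℤ):ℝ)| := by apply hΔge; norm_num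
    have hpos : 0 < α / Δ |((1:ℤ):ℝ)| := div_pos hα (by linarith)
    simp only [mul_zero, abs_zero] at h1
    linarith
  have hsub : Summable (fun k : {k : ℤ // k ≠ 0} => ‖fhat (k:ℤ)‖) := by
    apply Summable.of_nonneg_of_le (fun k => norm_nonneg _) _ (hsum.mul_left M)
    intro k
    calc ‖fhat (k:ℤ)‖ ≤ M / Δt |((k:ℤ):ℝ)| := hdecay k k.2
      _ = M * (1 / Δt |((k:ℤ):ℝ)|) := by rw [mul_one_div]
  have hsumZ : Summable (fun k : ℤ => ‖fhat k‖) := by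
    rw [← (Set.finite_singleton (0:ℤ)).summable_compl_iff]
    apply hsub.congr
    intro k
    rfl
  set Sn : ℝ := ∑' k : ℤ, ‖fhat k‖ with hSn
  have hSnn : 0 ≤ Sn := tsum_nonneg (fun k => norm_nonneg _)
  set P : ℝ := 2 * π * |ρ| with hPdef
  have hPpos : 0 < P := by
    have := abs_pos.mpr hρ0
    positivity
  set A0 : ℝ := (144 * Real.exp 1)^2 with hA0
  set C1 : ℝ := cbar * Real.exp 1 with hC1
  have hC1pos : 0 < C1 := mul_pos cbar_pos (Real.exp_pos 1)
  refine ⟨(12:ℝ)⁻¹, C1 * Sn + 1, max (max 1 (P⁻¹^2)) (A0 / P), by norm_num, ?_, ?_⟩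
  · nlinarith [mul_nonneg hC1pos.le hSnn]
  intro T hT θ
  have hTa : (1:ℝ) ≤ T :=
    le_trans (le_trans (le_max_left 1 (P⁻¹^2)) (le_max_left _ (A0/P))) hT
  have hTb : P⁻¹^2 ≤ T :=
    le_trans (le_trans (le_max_right 1 (P⁻¹^2)) (le_max_left _ (A0/P))) hT
  have hTc : A0 / P ≤ T := le_trans (le_max_right _ _) hT
  have hT0 : (0:ℝ) < T := lt_of_lt_of_le one_pos hTa
  have hTne : T ≠ 0 := ne_of_gt hT0
  have hTC : (T:ℂ) ≠ 0 := Complex.ofReal_ne_zero.mpr hTne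
  set ε : ℝ := C1 * Real.exp (-((P * T) ^ ((6:ℝ))⁻¹)) with hε
  have hεnn : 0 ≤ ε := mul_nonneg hC1pos.le (Real.exp_nonneg _)
  -- the summand functions
  set F : ℤ → ℝ → B := fun k t =>
    ((wbar (t/T) : ℝ):ℂ) • (Complex.exp (2 * π * Complex.I * k * ((θ + ρ*t : ℝ):ℂ)) • fhat k)
    with hFdef
  have hwcont : Continuous wbar := (wbar_contDiff (n := ⊤)).continuous
  have hecont : ∀ k : ℤ, Continuous
      (fun t : ℝ => Complex.exp (2 * π * Complex.I * k * ((θ + ρ*t : ℝ):ℂ))) := by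
    intro k
    apply Complex.continuous_exp.comp
    apply Continuous.mul continuous_const
    exact Complex.continuous_ofReal.comp
      (continuous_const.add (continuous_const.mul continuous_id))
  have hFcont : ∀ k : ℤ, Continuous (F k) := by
    intro k
    apply Continuous.smul
    · exact Complex.continuous_ofReal.comp (hwcont.comp (continuous_id.div_const T))
    · exact (hecont k).smul continuous_const
  have hFint : ∀ k : ℤ, Integrable (F k) (volume.restrict (Set.Ioc 0 T)) :=
    fun k => (hFcont k).integrableOn_Ioc
  have henorm : ∀ (k : ℤ) (t : ℝ),
      ‖Complex.exp (2 * π * Complex.I * k * ((θ + ρ*t : ℝ):ℂ))‖ = 1 := by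
    intro k t
    rw [Complex.norm_exp]
    norm_num [Complex.mul_re, Complex.mul_im]
  have hbnd : ∀ k : ℤ, (∫ t in Set.Ioc (0:ℝ) T, ‖F k t‖) ≤ (cbar * T) * ‖fhat k‖ := by
    intro k
    have hle : ∀ t ∈ Set.Ioc (0:ℝ) T, ‖F k t‖ ≤ cbar * ‖fhat k‖ := by
      intro t _
      rw [hFdef]
      simp only [norm_smul, Complex.norm_real, Real.norm_eq_abs, henorm k t, one_mul]
      exact mul_le_mul_of_nonneg_right (abs_wbar_le _) (norm_nonneg _)
    calc (∫ t in Set.Ioc (0:ℝ) T, ‖F k t‖)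
        ≤ ∫ _t in Set.Ioc (0:ℝ) T, cbar * ‖fhat k‖ := by
          apply setIntegral_mono_on (hFint k).norm
            (integrableOn_const measure_Ioc_lt_top.ne) measurableSet_Ioc hle
      _ = (cbar * T) * ‖fhat k‖ := by
          rw [setIntegral_const, Real.volume_real_Ioc_of_le hT0.le, sub_zero,
            smul_eq_mul]
          ring
  have hsum_int : Summable (fun k : ℤ => ∫ t in Set.Ioc (0:ℝ) T, ‖F k t‖) :=
    Summable.of_nonneg_of_le (fun k => integral_nonneg (fun _ => norm_nonneg _)) hbnd
      (hsumZ.mul_left (cbar * T))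
  have Hs := MeasureTheory.hasSum_integral_of_summable_integral_norm hFint hsum_int
  have htsum : ∀ t : ℝ, (∑' k : ℤ, F k t) = ((wbar (t/T) : ℝ):ℂ) • f (θ + ρ*t) := by
    intro t
    exact (HasSum.const_smul _ (hf (θ + ρ*t))).tsum_eq
  -- convert to interval integrals
  have Hs2 : HasSum (fun k : ℤ => ∫ t in (0:ℝ)..T, F k t)
      (∫ t in (0:ℝ)..T, ((wbar (t/T) : ℝ):ℂ) • f (θ + ρ*t)) := by
    have e1 : (fun k : ℤ => ∫ t in (0:ℝ)..T, F k t)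
        = fun k : ℤ => ∫ t in Set.Ioc (0:ℝ) T, F k t := by
      funext k
      exact intervalIntegral.integral_of_le hT0.le
    rw [e1, intervalIntegral.integral_of_le hT0.le]
    have e2 : (∫ t in Set.Ioc (0:ℝ) T, ((wbar (t/T) : ℝ):ℂ) • f (θ + ρ*t))
        = ∫ t in Set.Ioc (0:ℝ) T, (∑' k : ℤ, F k t) := by
      apply setIntegral_congr_fun measurableSet_Ioc
      intro t _
      exact (htsum t).symm
    rw [e2]
    exact Hs
  set c : ℤ → ℂ := fun k => ∫ t in (0:ℝ)..T,
    ((wbar (t/T) : ℝ):ℂ) * Complex.exp (2 * π * Complex.I * k * ((θ + ρ*t : ℝ):ℂ)) with hcdef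
  have hck : ∀ k : ℤ, (∫ t in (0:ℝ)..T, F k t) = c k • fhat k := by
    intro k
    rw [hcdef]
    rw [← intervalIntegral.integral_smul_const]
    apply intervalIntegral.integral_congr
    intro t _
    simp only [hFdef, smul_smul]
  have Hs3 : HasSum (fun k : ℤ => ((T:ℂ)⁻¹ * c k) • fhat k)
      ((T:ℂ)⁻¹ • ∫ t in (0:ℝ)..T, ((wbar (t/T) : ℝ):ℂ) • f (θ + ρ*t)) := by
    have e2 : (fun k : ℤ => ((T:ℂ)⁻¹ * c k) • fhat k)
        = fun k : ℤ => (T:ℂ)⁻¹ • ((∫ t in (0:ℝ)..T, F k t)) := by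
      funext k
      rw [hck k, smul_smul]
    rw [e2]
    exact Hs2.const_smul _
  have hc0 : c 0 = (T:ℂ) := by
    rw [hcdef]
    simp only [Int.cast_zero, mul_zero, zero_mul, Complex.exp_zero, mul_one]
    rw [intervalIntegral.integral_ofReal]
    rw [intervalIntegral.integral_comp_div (f := wbar) (c := T) hTne]
    rw [zero_div, div_self hTne, wbar_integral_one, smul_eq_mul, mul_one]
  -- the per-coefficient bound for k ≠ 0
  have hkey : ∀ k : ℤ, k ≠ 0 → ‖(T:ℂ)⁻¹ * c k‖ ≤ ε := by
    intro k hk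
    set a : ℝ := 2 * π * ((k:ℝ) * ρ) * T with hadef
    have h1k : (1:ℝ) ≤ |(k:ℝ)| := by
      rw [← Int.cast_abs]
      exact_mod_cast Int.one_le_abs hk
    have hPT : P * T ≤ |a| := by
      have habs : |a| = 2 * π * (|(k:ℝ)| * |ρ|) * T := by
        rw [hadef, abs_mul, abs_mul, abs_mul, abs_mul]
        rw [_root_.abs_of_nonneg (by norm_num : (0:ℝ) ≤ 2),
          _root_.abs_of_pos hπ, _root_.abs_of_pos hT0]
      rw [habs, hPdef]
      have h2 : |ρ| ≤ |(k:ℝ)| * |ρ| := le_mul_of_one_le_left (abs_nonneg ρ) h1k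
      have h3 := mul_le_mul_of_nonneg_right
        (mul_le_mul_of_nonneg_left h2 (by positivity : (0:ℝ) ≤ 2*π)) hT0.le
      calc 2 * π * |ρ| * T ≤ 2 * π * (|(k:ℝ)| * |ρ|) * T := by
            rw [mul_assoc (2*π), mul_assoc (2*π)] at h3
            linarith [h3]
        _ = 2 * π * (|(k:ℝ)| * |ρ|) * T := rfl
    have hA0a : A0 ≤ |a| := le_trans ((div_le_iff₀ hPpos).mp hTc) (by linarith [hPT])
    have hphase : ∀ t : ℝ,
        Complex.exp (2 * π * Complex.I * k * ((θ + ρ*t : ℝ):ℂ))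
          = Complex.exp (2 * π * Complex.I * k * ((θ:ℝ):ℂ))
            * Complex.exp (((2 * π * ((k:ℝ) * ρ) * t : ℝ):ℂ) * Complex.I) := by
      intro t
      rw [← Complex.exp_add]
      congr 1
      push_cast
      ring
    have hHeq : ∀ t : ℝ,
        ((wbar (t/T) : ℝ):ℂ) * Complex.exp (((2 * π * ((k:ℝ) * ρ) * t : ℝ):ℂ) * Complex.I)
          = (fun s : ℝ => ((wbar s : ℝ):ℂ) * Complex.exp ((a:ℂ) * (s:ℂ) * Complex.I)) (t/T) := by
      intro t
      simp only []
      congr 2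
      push_cast
      rw [hadef]
      push_cast
      field_simp
    have hcksplit : c k = Complex.exp (2 * π * Complex.I * k * ((θ:ℝ):ℂ))
        * ((T:ℝ) • ∫ s in (0:ℝ)..1, ((wbar s : ℝ):ℂ) * Complex.exp ((a:ℂ) * (s:ℂ) * Complex.I)) := by
      simp only [hcdef]
      have e3 : (fun t : ℝ => ((wbar (t/T) : ℝ):ℂ)
            * Complex.exp (2 * π * Complex.I * k * ((θ + ρ*t : ℝ):ℂ)))
          = fun t : ℝ => Complex.exp (2 * π * Complex.I * k * ((θ:ℝ):ℂ))
            * ((fun s : ℝ => ((wbar s : ℝ):ℂ) * Complex.exp ((a:ℂ) * (s:ℂ) * Complex.I)) (t/T)) := by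
        funext t
        rw [hphase t, ← hHeq t]
        ring
      rw [e3, intervalIntegral.integral_const_mul]
      congr 1
      rw [intervalIntegral.integral_comp_div (c := T)
        (f := fun s : ℝ => ((wbar s : ℝ):ℂ) * Complex.exp ((a:ℂ) * (s:ℂ) * Complex.I)) hTne]
      rw [zero_div, div_self hTne]
    rw [hcksplit]
    rw [norm_mul, norm_mul]
    have he1 : ‖Complex.exp (2 * π * Complex.I * k * ((θ:ℝ):ℂ))‖ = 1 := by
      rw [Complex.norm_exp]
      norm_num [Complex.mul_re, Complex.mul_im]
    rw [he1, one_mul, norm_smul, Real.norm_eq_abs, _root_.abs_of_pos hT0]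
    rw [norm_inv, Complex.norm_real, Real.norm_eq_abs, _root_.abs_of_pos hT0]
    rw [← mul_assoc, inv_mul_cancel₀ hTne, one_mul]
    calc ‖∫ s in (0:ℝ)..1, ((wbar s : ℝ):ℂ) * Complex.exp ((a:ℂ) * (s:ℂ) * Complex.I)‖
        ≤ (cbar * Real.exp 1) * Real.exp (-(|a| ^ ((6:ℝ))⁻¹)) := osc_decay hA0a
      _ ≤ ε := by
          rw [hε, hC1]
          apply mul_le_mul_of_nonneg_left _ (by positivity)
          apply Real.exp_le_exp.mpr
          apply neg_le_neg
          exact Real.rpow_le_rpow (by positivity) hPT (by norm_num)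
  -- assemble
  have h0 : HasSum (fun k : ℤ => if k = 0 then fhat 0 else 0) (fhat 0) :=
    hasSum_ite_eq 0 (fhat 0)
  have Hsub := Hs3.sub h0
  have hterm : ∀ k : ℤ,
      ‖((T:ℂ)⁻¹ * c k) • fhat k - (if k = 0 then fhat 0 else 0)‖ ≤ ε * ‖fhat k‖ := by
    intro k
    by_cases hk : k = 0
    · subst hk
      rw [if_pos rfl, hc0, inv_mul_cancel₀ hTC, one_smul, sub_self, norm_zero]
      exact mul_nonneg hεnn (norm_nonneg _)
    · rw [if_neg hk, sub_zero, norm_smul]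
      exact mul_le_mul_of_nonneg_right (hkey k hk) (norm_nonneg _)
  have hsummable : Summable (fun k : ℤ =>
      ‖((T:ℂ)⁻¹ * c k) • fhat k - (if k = 0 then fhat 0 else 0)‖) :=
    Summable.of_nonneg_of_le (fun _ => norm_nonneg _) hterm (hsumZ.mul_left ε)
  have hfinal : ‖((T:ℂ))⁻¹ • (∫ t in (0:ℝ)..T, ((wbar (t / T) : ℝ) : ℂ) • f (θ + ρ * t)) -
      fhat 0‖ ≤ ε * Sn := by
    rw [← Hsub.tsum_eq]
    calc ‖∑' k : ℤ, (((T:ℂ)⁻¹ * c k) • fhat k - (if k = 0 then fhat 0 else 0))‖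
        ≤ ∑' k : ℤ, ‖((T:ℂ)⁻¹ * c k) • fhat k - (if k = 0 then fhat 0 else 0)‖ :=
          norm_tsum_le_tsum_norm hsummable
      _ ≤ ∑' k : ℤ, ε * ‖fhat k‖ := hsummable.tsum_le_tsum hterm (hsumZ.mul_left ε)
      _ = ε * Sn := tsum_mul_left
  refine le_trans hfinal ?_
  -- final comparison of exponents
  have hrp : T ^ ((12:ℝ))⁻¹ ≤ (P*T) ^ ((6:ℝ))⁻¹ := by
    have hPinv : P⁻¹ ≤ T ^ ((2:ℝ))⁻¹ := by
      have h := Real.rpow_le_rpow (by positivity) hTb (by norm_num : (0:ℝ) ≤ (2:ℝ)⁻¹)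
      calc P⁻¹ = (P⁻¹^(2:ℕ)) ^ ((2:ℝ))⁻¹ := by
            rw [← Real.rpow_natCast _ 2, ← Real.rpow_mul (by positivity)]
            norm_num
        _ ≤ T ^ ((2:ℝ))⁻¹ := h
    have hTsplit : T = T ^ ((2:ℝ))⁻¹ * T ^ ((2:ℝ))⁻¹ := by
      rw [← Real.rpow_add hT0]
      norm_num
    have hsq : T ^ ((2:ℝ))⁻¹ ≤ P * T := by
      calc T ^ ((2:ℝ))⁻¹ = P * (P⁻¹ * T ^ ((2:ℝ))⁻¹) := by
            field_simp
        _ ≤ P * (T ^ ((2:ℝ))⁻¹ * T ^ ((2:ℝ))⁻¹) := by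
            apply mul_le_mul_of_nonneg_left _ hPpos.le
            exact mul_le_mul_of_nonneg_right hPinv (Real.rpow_nonneg hT0.le _)
        _ = P * T := by rw [← hTsplit]
    calc T ^ ((12:ℝ))⁻¹ = (T ^ ((2:ℝ))⁻¹) ^ ((6:ℝ))⁻¹ := by
          rw [← Real.rpow_mul hT0.le]
          norm_num
      _ ≤ (P*T) ^ ((6:ℝ))⁻¹ :=
          Real.rpow_le_rpow (Real.rpow_nonneg hT0.le _) hsq (by norm_num)
  calc ε * Sn ≤ (C1 * Real.exp (-(T ^ ((12:ℝ))⁻¹))) * Sn := by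
        apply mul_le_mul_of_nonneg_right _ hSnn
        rw [hε]
        apply mul_le_mul_of_nonneg_left _ hC1pos.le
        apply Real.exp_le_exp.mpr
        linarith
    _ = (C1 * Sn) * Real.exp (-(T ^ ((12:ℝ))⁻¹)) := by ring
    _ ≤ (C1 * Sn + 1) * Real.exp (-T ^ ((12:ℝ))⁻¹) := by
        apply mul_le_mul_of_nonneg_right _ (Real.exp_nonneg _)
        linarith
end
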